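/- arXiv:2503.17858 — 5 statements merged into one kernel-verified Lean document; each statement's English description precedes it below -/
import Mathlib

section
/- With G_η(s) = π^{1/2-s} i^{η'} Γ((η'+s)/2)/Γ((1+η'-s)/2), η' ∈ {0,1}, η' ≡ η (mod 2): G_η is meromorphic with simple poles exactly at s = -n for n ∈ ℕ₀ with n ≡ η (mod 2), and the residue at s = -n equals 2 (2πi)^n / n!. -/
open Complex Filter Topology

/-- Residue of `Complex.Gamma` at `-n`. -/
lemma Gamma_residue_neg_nat (n : ℕ) :
    Tendsto (fun s : ℂ => (s + n) * Complex.Gamma s) (𝓝[≠] (-(n:ℂ)))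
      (𝓝 ((-1) ^ n / n.factorial)) := by
  induction n with
  | zero =>
    simpa using Complex.tendsto_self_mul_Gamma_nhds_zero
  | succ n ih =>
    have hmap : Tendsto (fun s : ℂ => s + 1) (𝓝[≠] (-((n+1:ℕ):ℂ))) (𝓝[≠] (-(n:ℂ))) := by
      rw [tendsto_nhdsWithin_iff]
      constructor
      · have h : Tendsto (fun s : ℂ => s + 1) (𝓝 (-((n+1:ℕ):ℂ))) (𝓝 (-((n+1:ℕ):ℂ) + 1)) :=
          (continuous_id.add continuous_const).tendsto _
        have e : -((n+1:ℕ):ℂ) + 1 = -(n:ℂ) := by push_cast; ring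
        exact (e ▸ h).mono_left nhdsWithin_le_nhds
      · filter_upwards [self_mem_nhdsWithin] with s hs
        simp only [Set.mem_compl_iff, Set.mem_singleton_iff] at hs ⊢
        intro h
        apply hs
        have : s = -(n:ℂ) - 1 := by linear_combination h
        rw [this]; push_cast; ring
    have h1 : Tendsto (fun s : ℂ => ((s+1) + n) * Complex.Gamma (s+1))
        (𝓝[≠] (-((n+1:ℕ):ℂ))) (𝓝 ((-1) ^ n / n.factorial)) := ih.comp hmap
    have hne : (-((n+1:ℕ):ℂ)) ≠ 0 := by
      push_cast; intro h; have := neg_eq_zero.mp h; norm_cast at this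
    have h2 : Tendsto (fun s : ℂ => s⁻¹) (𝓝[≠] (-((n+1:ℕ):ℂ))) (𝓝 ((-((n+1:ℕ):ℂ)))⁻¹) :=
      ((continuousAt_inv₀ hne).tendsto).mono_left nhdsWithin_le_nhds
    have key := h1.mul h2
    have hev : ∀ᶠ s : ℂ in 𝓝[≠] (-((n+1:ℕ):ℂ)),
        ((s+1) + n) * Complex.Gamma (s+1) * s⁻¹ = (s + ((n+1:ℕ):ℂ)) * Complex.Gamma s := by
      have h0 : ∀ᶠ s : ℂ in 𝓝[≠] (-((n+1:ℕ):ℂ)), s ≠ 0 := by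
        refine Filter.Eventually.filter_mono nhdsWithin_le_nhds ?_
        exact (isOpen_compl_singleton.eventually_mem (by simpa using hne))
      filter_upwards [h0] with s hs
      rw [Complex.Gamma_add_one s hs]
      push_cast
      field_simp
      ring
    have := key.congr' hev
    convert this using 2
    have hf : ((n.factorial :ℂ)) ≠ 0 := by
      exact_mod_cast Nat.cast_ne_zero.mpr n.factorial_ne_zero
    have hf1 : ((n:ℂ) + 1) ≠ 0 := by
      intro h; exact hne (by push_cast; rw [neg_eq_zero]; linear_combination h)
    rw [Nat.factorial_succ]
    push_cast
    have h4 : (-((n:ℂ) * n.factorial) - n.factorial) ≠ 0 := by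
      intro h
      apply mul_ne_zero hf1 hf
      linear_combination -h
    field_simp
    ring
noncomputable def Gd (η : ℤ) (s : ℂ) : ℂ :=
  ((Real.pi : ℂ) ^ ((1 : ℂ) / 2 - s)) * (if Even η then 1 else Complex.I) *
    Complex.Gamma (((if Even η then (0 : ℂ) else 1) + s) / 2) /
    Complex.Gamma ((1 + (if Even η then (0 : ℂ) else 1) - s) / 2)


lemma ev_ne_nat (n : ℕ) : ∀ᶠ s : ℂ in 𝓝[≠] (-(n:ℂ)), ∀ m : ℕ, s ≠ -(m:ℂ) := by
  filter_upwards [nhdsWithin_le_nhds (Metric.ball_mem_nhds (-(n:ℂ)) (by norm_num : (0:ℝ) < 1/2)),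
    self_mem_nhdsWithin] with s hball hs m hm
  rcases eq_or_ne m n with rfl | hmn
  · exact hs hm
  · rw [hm] at hball
    rw [Metric.mem_ball] at hball
    have : dist (-(m:ℂ)) (-(n:ℂ)) = |(m:ℝ) - n| := by
      rw [Complex.dist_eq, show -(m:ℂ) - -(n:ℂ) = (((n:ℝ) - m : ℝ):ℂ) by push_cast; ring,
        Complex.norm_real, Real.norm_eq_abs, abs_sub_comm]
    rw [this] at hball
    have h1 : (1:ℝ) ≤ |(m:ℝ) - n| := by
      have : ((1:ℤ)) ≤ |(m:ℤ) - n| := Int.one_le_abs (sub_ne_zero.mpr (by exact_mod_cast hmn))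
      calc (1:ℝ) ≤ |((m:ℤ) - n : ℤ)| := by exact_mod_cast this
        _ = |(m:ℝ) - n| := by push_cast; rfl
    linarith

lemma Gd_even_eq (η : ℤ) (hη : Even η) (s : ℂ) :
    Gd η s = Complex.Gammaℝ s / Complex.Gammaℝ (1 - s) := by
  have hπ : (Real.pi:ℂ) ≠ 0 := ofReal_ne_zero.mpr Real.pi_ne_zero
  simp only [Gd, if_pos hη, Complex.Gammaℝ_def, mul_one, zero_add]
  rw [mul_div_mul_comm, ← Complex.cpow_sub _ _ hπ, mul_div_assoc]
  rw [show (1:ℂ)/2 - s = -s/2 - (-(1-s)/2) by ring, show (1:ℂ) + 0 - s = 1 - s by ring]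

lemma Gd_odd_eq (η : ℤ) (hη : ¬ Even η) (s : ℂ) :
    Gd η s = Complex.I * (Complex.Gammaℝ (1 + s) / Complex.Gammaℝ (2 - s)) := by
  have hπ : (Real.pi:ℂ) ≠ 0 := ofReal_ne_zero.mpr Real.pi_ne_zero
  simp only [Gd, if_neg hη, Complex.Gammaℝ_def]
  rw [mul_div_mul_comm, ← Complex.cpow_sub _ _ hπ]
  rw [show (2 - s)/2 = (1 + 1 - s)/2 by ring,
    show -(1+s)/2 - (-(2-s)/2) = 1/2 - s by ring]
  ring

lemma Gd_even_residue (η : ℤ) (hη : Even η) (n k : ℕ) (hk : n = 2*k) :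
    Tendsto (fun s : ℂ => (s + n) * Gd η s) (𝓝[≠] (-(n:ℂ)))
      (𝓝 (2 * (2 * (Real.pi:ℂ) * Complex.I) ^ n / n.factorial)) := by
  have hπ : ((Real.pi:ℂ)) ≠ 0 := ofReal_ne_zero.mpr Real.pi_ne_zero
  have h2π : (2*(Real.pi:ℂ)) ≠ 0 := mul_ne_zero two_ne_zero hπ
  have hev : ∀ᶠ s : ℂ in 𝓝[≠] (-(n:ℂ)), ((s + n) * Complex.Gamma s) *
      (2 * (2*(Real.pi:ℂ))^(-s) * Complex.cos ((Real.pi:ℂ) * s / 2)) = (s + n) * Gd η s := by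
    filter_upwards [ev_ne_nat n] with s hs
    have hodd : ∀ m : ℕ, s ≠ -(2 * (m:ℂ) + 1) := by
      intro m h
      have := hs (2*m+1)
      apply this
      push_cast
      linear_combination h
    rw [Gd_even_eq η hη, Complex.Gammaℝ_div_Gammaℝ_one_sub hodd, Complex.Gammaℂ_def]
    ring
  have hcont : Tendsto (fun s : ℂ => 2 * (2*(Real.pi:ℂ))^(-s) * Complex.cos ((Real.pi:ℂ) * s / 2))
      (𝓝[≠] (-(n:ℂ)))
      (𝓝 (2 * (2*(Real.pi:ℂ))^(-(-(n:ℂ))) * Complex.cos ((Real.pi:ℂ) * (-(n:ℂ)) / 2))) := by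
    refine Tendsto.mono_left (ContinuousAt.tendsto ?_) nhdsWithin_le_nhds
    exact (continuousAt_const.mul ((continuousAt_const_cpow h2π).comp continuousAt_id.neg)).mul
      ((Complex.continuous_cos.continuousAt).comp
        ((continuousAt_const.mul continuousAt_id).div_const _))
  have key := ((Gamma_residue_neg_nat n).mul hcont).congr' hev
  have hcos : Complex.cos ((Real.pi:ℂ) * (-(n:ℂ)) / 2) = (((-1:ℝ)^k : ℝ) : ℂ) := by
    rw [show ((Real.pi:ℂ) * (-(n:ℂ)) / 2) = ((-((k:ℝ) * Real.pi) : ℝ) : ℂ) by push_cast [hk]; ring,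
      ← Complex.ofReal_cos]
    norm_cast
    rw [Real.cos_neg]
    simpa using Real.cos_nat_mul_pi_sub 0 k
  rw [neg_neg, Complex.cpow_natCast, hcos] at key
  convert key using 2
  have hf : ((n.factorial:ℂ)) ≠ 0 := Nat.cast_ne_zero.mpr n.factorial_ne_zero
  subst hk
  push_cast
  field_simp
  rw [mul_pow, pow_mul Complex.I 2 k, Complex.I_sq]
  ring_nf
  rw [show k*3 = 2*k + k by ring, pow_add, pow_mul (-1:ℂ) 2 k]
  norm_num

lemma Gd_odd_residue (η : ℤ) (hη : ¬ Even η) (n k : ℕ) (hk : n = 2*k+1) :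
    Tendsto (fun s : ℂ => (s + n) * Gd η s) (𝓝[≠] (-(n:ℂ)))
      (𝓝 (2 * (2 * (Real.pi:ℂ) * Complex.I) ^ n / n.factorial)) := by
  have hπ : ((Real.pi:ℂ)) ≠ 0 := ofReal_ne_zero.mpr Real.pi_ne_zero
  have h2π : (2*(Real.pi:ℂ)) ≠ 0 := mul_ne_zero two_ne_zero hπ
  have hev : ∀ᶠ s : ℂ in 𝓝[≠] (-(n:ℂ)), ((s + n) * Complex.Gamma s) *
      (Complex.I * (2 * (2*(Real.pi:ℂ))^(-s)) * Complex.sin ((Real.pi:ℂ) * s / 2))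
      = (s + n) * Gd η s := by
    filter_upwards [ev_ne_nat n] with s hs
    have hne : Complex.Gammaℝ (s + 1) ≠ 0 := by
      rw [Ne, Complex.Gammaℝ_eq_zero_iff]
      rintro ⟨m, hm⟩
      apply hs (2*m+1)
      push_cast
      linear_combination hm
    rw [Gd_odd_eq η hη, div_eq_mul_inv (Complex.Gammaℝ (1+s)) (Complex.Gammaℝ (2-s)),
      Complex.inv_Gammaℝ_two_sub hs, Complex.Gammaℂ_def,
      show (1:ℂ) + s = s + 1 by ring]
    field_simp
  have hcont : Tendsto (fun s : ℂ =>
      Complex.I * (2 * (2*(Real.pi:ℂ))^(-s)) * Complex.sin ((Real.pi:ℂ) * s / 2))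
      (𝓝[≠] (-(n:ℂ)))
      (𝓝 (Complex.I * (2 * (2*(Real.pi:ℂ))^(-(-(n:ℂ)))) * Complex.sin ((Real.pi:ℂ) * (-(n:ℂ)) / 2))) := by
    refine Tendsto.mono_left (ContinuousAt.tendsto ?_) nhdsWithin_le_nhds
    exact (continuousAt_const.mul (continuousAt_const.mul
        ((continuousAt_const_cpow h2π).comp continuousAt_id.neg))).mul
      ((Complex.continuous_sin.continuousAt).comp
        ((continuousAt_const.mul continuousAt_id).div_const _))
  have key := ((Gamma_residue_neg_nat n).mul hcont).congr' hev
  have hsin : Complex.sin ((Real.pi:ℂ) * (-(n:ℂ)) / 2) = (((-((-1:ℝ)^k)) : ℝ) : ℂ) := by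
    rw [show ((Real.pi:ℂ) * (-(n:ℂ)) / 2) = ((-(Real.pi/2 + (k:ℝ) * Real.pi) : ℝ) : ℂ) by
        push_cast [hk]; ring,
      ← Complex.ofReal_sin]
    norm_cast
    rw [Real.sin_neg]
    simp [Real.sin_add_nat_mul_pi]
  rw [neg_neg, Complex.cpow_natCast, hsin] at key
  convert key using 2
  have hf : ((n.factorial:ℂ)) ≠ 0 := Nat.cast_ne_zero.mpr n.factorial_ne_zero
  subst hk
  push_cast
  field_simp
  rw [mul_pow, pow_succ Complex.I, pow_mul Complex.I 2 k, Complex.I_sq]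
  ring_nf
  rw [show k*3 = 2*k + k by ring, pow_add, pow_mul (-1:ℂ) 2 k]
  norm_num

lemma isOpen_good (η : ℤ) : IsOpen {z : ℂ | ∀ n : ℕ, (n:ℤ) % 2 = η % 2 → z ≠ -(n:ℂ)} := by
  have spacing : ∀ n m : ℕ, (n:ℤ) % 2 = η % 2 → (m:ℤ) % 2 = η % 2 → n ≠ m →
      (2:ℝ) ≤ dist (-(n:ℂ)) (-(m:ℂ)) := by
    intro n m hn hm hnm
    have hdvd : (2:ℤ) ∣ (n:ℤ) - m := by omega
    have habs : (2:ℤ) ≤ |(n:ℤ) - m| := by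
      refine Int.le_of_dvd (abs_pos.mpr (sub_ne_zero.mpr (by exact_mod_cast hnm))) ?_
      exact (dvd_abs 2 _).mpr hdvd
    have : dist (-(n:ℂ)) (-(m:ℂ)) = |(n:ℝ) - m| := by
      rw [Complex.dist_eq, show -(n:ℂ) - -(m:ℂ) = (((m:ℝ) - n : ℝ):ℂ) by push_cast; ring,
        Complex.norm_real, Real.norm_eq_abs, abs_sub_comm]
    rw [this]
    calc (2:ℝ) ≤ |((n:ℤ) - m : ℤ)| := by exact_mod_cast habs
      _ = |(n:ℝ) - m| := by push_cast; rfl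
  rw [Metric.isOpen_iff]
  intro z hz
  by_cases h : ∃ n : ℕ, (n:ℤ) % 2 = η % 2 ∧ dist z (-(n:ℂ)) ≤ 1
  · obtain ⟨n, hPn, hd⟩ := h
    refine ⟨dist z (-(n:ℂ)), dist_pos.mpr (hz n hPn), ?_⟩
    intro w hw m hPm hwm
    rw [Metric.mem_ball, hwm] at hw
    rcases eq_or_ne m n with rfl | hmn
    · rw [dist_comm] at hw; exact absurd hw (lt_irrefl _)
    · have h2 := spacing n m hPn hPm (Ne.symm hmn)
      have : dist (-(n:ℂ)) (-(m:ℂ)) ≤ dist (-(n:ℂ)) z + dist z (-(m:ℂ)) := dist_triangle _ _ _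
      rw [dist_comm (-(n:ℂ)) z] at this
      rw [dist_comm] at hw
      linarith
  · push_neg at h
    refine ⟨1, one_pos, ?_⟩
    intro w hw m hPm hwm
    rw [Metric.mem_ball, hwm, dist_comm] at hw
    exact absurd (h m hPm).le (not_le.mpr hw)

lemma Gd_analytic (η : ℤ) (s : ℂ) (hs : ∀ n : ℕ, (n:ℤ) % 2 = η % 2 → s ≠ -(n:ℂ)) :
    AnalyticAt ℂ (Gd η) s := by
  have hπ : ((Real.pi:ℂ)) ≠ 0 := ofReal_ne_zero.mpr Real.pi_ne_zero
  have hdiff : DifferentiableOn ℂ (Gd η) {z : ℂ | ∀ n : ℕ, (n:ℤ) % 2 = η % 2 → z ≠ -(n:ℂ)} := by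
    intro z hz
    apply DifferentiableAt.differentiableWithinAt
    simp only [Set.mem_setOf_eq] at hz
    have h1 : DifferentiableAt ℂ (fun z : ℂ => (Real.pi:ℂ) ^ ((1:ℂ)/2 - z)) z :=
      ((differentiableAt_const _).sub differentiableAt_id).const_cpow (Or.inl hπ)
    have h3 : DifferentiableAt ℂ
        (fun z : ℂ => Complex.Gamma (((if Even η then (0:ℂ) else 1) + z)/2)) z := by
      refine (Complex.differentiableAt_Gamma _ ?_).comp z
        (((differentiableAt_const _).add differentiableAt_id).div_const 2)
      intro m h
      by_cases hE : Even η
      · rw [if_pos hE] at h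
        have hη2 := Int.even_iff.mp hE
        exact hz (2*m) (by push_cast; omega) (by push_cast; linear_combination 2*h)
      · rw [if_neg hE] at h
        have hη2 := Int.not_even_iff.mp hE
        exact hz (2*m+1) (by push_cast; omega) (by push_cast; linear_combination 2*h)
    have h4 : DifferentiableAt ℂ
        (fun z : ℂ => (Complex.Gamma ((1 + (if Even η then (0:ℂ) else 1) - z)/2))⁻¹) z := by
      have hin : Differentiable ℂ
          (fun z : ℂ => (1 + (if Even η then (0:ℂ) else 1) - z)/2) :=
        ((differentiable_const _).sub differentiable_id).div_const 2
      exact (Complex.differentiable_one_div_Gamma.comp hin).differentiableAt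
    have hGd : Gd η = fun z : ℂ =>
        ((Real.pi:ℂ) ^ ((1:ℂ)/2 - z) * (if Even η then 1 else Complex.I) *
          Complex.Gamma (((if Even η then (0:ℂ) else 1) + z)/2)) *
          (Complex.Gamma ((1 + (if Even η then (0:ℂ) else 1) - z)/2))⁻¹ := by
      funext w; rw [Gd, div_eq_mul_inv]
    rw [hGd]
    exact ((h1.mul (differentiableAt_const _)).mul h3).mul h4
  exact hdiff.analyticAt ((isOpen_good η).mem_nhds hs)

/-- `G_η` is analytic away from the points `s = -n`, `n ∈ ℕ₀`, `n ≡ η (mod 2)`,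
and at each such point it has a simple pole with residue `2 (2πi)^n / n!`. -/
theorem Gd_poles_and_residues (η : ℤ) :
    (∀ s : ℂ, (∀ n : ℕ, (n : ℤ) % 2 = η % 2 → s ≠ -(n : ℂ)) → AnalyticAt ℂ (Gd η) s) ∧
    (∀ n : ℕ, (n : ℤ) % 2 = η % 2 →
      Filter.Tendsto (fun s : ℂ => (s + (n : ℂ)) * Gd η s)
        (nhdsWithin (-(n : ℂ)) {(-(n : ℂ))}ᶜ)
        (nhds (2 * (2 * (Real.pi : ℂ) * Complex.I) ^ n / (n.factorial : ℂ)))) := by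
  constructor
  · exact fun s hs => Gd_analytic η s hs
  · intro n hn
    by_cases hE : Even η
    · have hη2 := Int.even_iff.mp hE
      exact Gd_even_residue η hE n (n/2) (by omega)
    · have hη2 := Int.not_even_iff.mp hE
      exact Gd_odd_residue η hE n (n/2) (by omega)
end

section
/- Let δ₁,δ₂ ∈ ℤ and let s₁,s₂ ∈ ℂ with 0 < Re(s₁), 0 < Re(s₂), and Re(s₁+s₂) < 1. Then ∫_ℝ sgn(x)^{δ₁}|x|^{s₁-1} sgn(1-x)^{δ₂}|1-x|^{s₂-1} dx = B(s₁,s₂) + (-1)^{δ₂} B(1-s₁-s₂, s₂) + (-1)^{δ₁} B(s₁, 1-s₁-s₂), where B is the Euler beta function. -/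
open MeasureTheory Set Complex


/-- The Euler beta function `B(a,b) = Γ(a)Γ(b)/Γ(a+b)`. -/
noncomputable def eulerBeta (a b : ℂ) : ℂ :=
  Complex.Gamma a * Complex.Gamma b / Complex.Gamma (a + b)



-- cpow helper
theorem cpow_ofReal_inv {t : ℝ} (ht : 0 < t) (w : ℂ) : ((t⁻¹ : ℝ) : ℂ) ^ w = (t:ℂ) ^ (-w) := by
  rw [Complex.ofReal_inv, Complex.inv_cpow _ _ (by
    rw [Complex.arg_ofReal_of_nonneg ht.le]; exact Real.pi_ne_zero.symm), ← Complex.cpow_neg]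

theorem ofReal_sq_inv {t : ℝ} (ht : 0 < t) : (((t^2)⁻¹ : ℝ) : ℂ) = (t:ℂ) ^ (-2 : ℂ) := by
  rw [Complex.cpow_neg, Complex.ofReal_inv, Complex.ofReal_pow]
  congr 1
  rw [show (2:ℂ) = ((2:ℕ):ℂ) by norm_num, Complex.cpow_natCast]

theorem imageB : (fun t : ℝ => t⁻¹) '' Ioo 0 1 = Ioi 1 := by
  ext x
  simp only [mem_image, mem_Ioo, mem_Ioi]
  constructor
  · rintro ⟨t, ⟨h0, h1⟩, rfl⟩; exact one_lt_inv_iff₀.2 ⟨h0, h1⟩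
  · intro hx
    exact ⟨x⁻¹, ⟨inv_pos.2 (lt_trans one_pos hx), inv_lt_one_of_one_lt₀ hx⟩, inv_inv x⟩

theorem imageC : (fun t : ℝ => 1 + (t-1)⁻¹) '' Ioo 0 1 = Iio 0 := by
  ext x
  simp only [mem_image, mem_Ioo, mem_Iio]
  constructor
  · rintro ⟨t, ⟨h0, h1⟩, rfl⟩
    have key : (t-1 : ℝ)⁻¹ = -((1-t)⁻¹) := by
      rw [show (t-1:ℝ) = -(1-t) by ring, ← neg_inv]
    have h2 : 1 < (1-t : ℝ)⁻¹ := one_lt_inv_iff₀.2 ⟨by linarith, by linarith⟩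
    rw [key]; linarith
  · intro hx
    refine ⟨1 + (x-1)⁻¹, ⟨?_, ?_⟩, ?_⟩
    · have key : (x-1 : ℝ)⁻¹ = -((1-x)⁻¹) := by
        rw [show (x-1:ℝ) = -(1-x) by ring, ← neg_inv]
      have h2 : (1-x : ℝ)⁻¹ < 1 := inv_lt_one_of_one_lt₀ (by linarith)
      rw [key]; linarith
    · have : (x-1 : ℝ)⁻¹ < 0 := inv_neg''.2 (by linarith)
      linarith
    · rw [add_sub_cancel_left, inv_inv]; ring

theorem ptB (s₁ s₂ : ℂ) {t : ℝ} (ht : t ∈ Ioo (0:ℝ) 1) :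
    |(-(t^2)⁻¹ : ℝ)| • ((((t⁻¹:ℝ)):ℂ)^(s₁-1) * (((t⁻¹ - 1 : ℝ)):ℂ)^(s₂-1))
      = (t:ℂ)^((1-s₁-s₂)-1) * ((1-t:ℝ):ℂ)^(s₂-1) := by
  obtain ⟨h0, h1⟩ := ht
  have htne : (t:ℂ) ≠ 0 := Complex.ofReal_ne_zero.2 (ne_of_gt h0)
  have e1 : ((t⁻¹:ℝ):ℂ)^(s₁-1) = (t:ℂ)^(-(s₁-1)) := cpow_ofReal_inv h0 _
  have e2 : ((t⁻¹-1:ℝ):ℂ)^(s₂-1) = ((1-t:ℝ):ℂ)^(s₂-1) * (t:ℂ)^(-(s₂-1)) := by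
    rw [show (t⁻¹-1:ℝ) = (1-t)*t⁻¹ by field_simp,
      Complex.ofReal_mul, mul_cpow_ofReal_nonneg (by linarith) (inv_nonneg.2 h0.le),
      cpow_ofReal_inv h0]
  have e3 : |(-(t^2)⁻¹ : ℝ)| = (t^2)⁻¹ := by
    rw [abs_neg, abs_inv, _root_.abs_of_nonneg (sq_nonneg t)]
  rw [e1, e2, e3, Complex.real_smul, ofReal_sq_inv h0,
    show ((1:ℂ)-s₁-s₂-1) = (-2) + (-(s₁-1)) + (-(s₂-1)) by ring,
    Complex.cpow_add _ _ htne, Complex.cpow_add _ _ htne]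
  ring

theorem ptC (s₁ s₂ : ℂ) {t : ℝ} (ht : t ∈ Ioo (0:ℝ) 1) :
    |(-1/((t-1)^2) : ℝ)| • ((((-(1 + (t-1)⁻¹):ℝ)):ℂ)^(s₁-1) * (((1 - (1 + (t-1)⁻¹) : ℝ)):ℂ)^(s₂-1))
      = (t:ℂ)^(s₁-1) * ((1-t:ℝ):ℂ)^((1-s₁-s₂)-1) := by
  obtain ⟨h0, h1⟩ := ht
  have h1t : (0:ℝ) < 1 - t := by linarith
  have htne : ((1-t:ℝ):ℂ) ≠ 0 := Complex.ofReal_ne_zero.2 (ne_of_gt h1t)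
  have hne : (t - 1 : ℝ) ≠ 0 := by linarith
  have e1 : ((-(1 + (t-1)⁻¹):ℝ):ℂ)^(s₁-1) = (t:ℂ)^(s₁-1) * ((1-t:ℝ):ℂ)^(-(s₁-1)) := by
    rw [show (-(1 + (t-1)⁻¹):ℝ) = t * (1-t)⁻¹ by field_simp; ring,
      Complex.ofReal_mul, mul_cpow_ofReal_nonneg h0.le (inv_nonneg.2 h1t.le),
      cpow_ofReal_inv h1t]
  have e2 : ((1 - (1 + (t-1)⁻¹):ℝ):ℂ)^(s₂-1) = ((1-t:ℝ):ℂ)^(-(s₂-1)) := by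
    rw [show (1 - (1 + (t-1)⁻¹):ℝ) = (1-t)⁻¹ by field_simp; ring, cpow_ofReal_inv h1t]
  have e3 : |(-1/((t-1)^2) : ℝ)| = ((1-t)^2)⁻¹ := by
    rw [abs_div, abs_neg, abs_one, _root_.abs_of_nonneg (sq_nonneg (t-1)), one_div,
      show ((t-1:ℝ))^2 = (1-t)^2 by ring]
  rw [e1, e2, e3, Complex.real_smul, ofReal_sq_inv h1t,
    show ((1:ℂ)-s₁-s₂-1) = (-2) + (-(s₁-1)) + (-(s₂-1)) by ring,
    Complex.cpow_add _ _ htne, Complex.cpow_add _ _ htne]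
  ring

theorem J_int (u v : ℂ) (hu : 0 < u.re) (hv : 0 < v.re) :
    IntegrableOn (fun t : ℝ => (t:ℂ)^(u-1) * ((1-t:ℝ):ℂ)^(v-1)) (Ioo (0:ℝ) 1) := by
  have := Complex.betaIntegral_convergent hu hv
  rw [intervalIntegrable_iff_integrableOn_Ioo_of_le (by norm_num : (0:ℝ) ≤ 1)] at this
  exact this.congr_fun (fun t ht => by push_cast; ring) measurableSet_Ioo

theorem J_eq (u v : ℂ) (hu : 0 < u.re) (hv : 0 < v.re) :
    ∫ t in Ioo (0:ℝ) 1, (t:ℂ)^(u-1) * ((1-t:ℝ):ℂ)^(v-1) = eulerBeta u v := by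
  have h1 : ∫ t in Ioo (0:ℝ) 1, (t:ℂ)^(u-1) * ((1-t:ℝ):ℂ)^(v-1)
      = Complex.betaIntegral u v := by
    rw [Complex.betaIntegral, intervalIntegral.integral_of_le (by norm_num : (0:ℝ) ≤ 1),
      integral_Ioc_eq_integral_Ioo]
    exact setIntegral_congr_fun measurableSet_Ioo (fun t ht => by push_cast; ring)
  have hne : Complex.Gamma (u + v) ≠ 0 :=
    Complex.Gamma_ne_zero_of_re_pos (by simp only [Complex.add_re]; linarith)
  have h2 := Complex.Gamma_mul_Gamma_eq_betaIntegral hu hv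
  rw [h1, eulerBeta, h2]; field_simp

theorem derivB : ∀ t ∈ Ioo (0:ℝ) 1,
    HasDerivWithinAt (fun t : ℝ => t⁻¹) (-(t^2)⁻¹) (Ioo 0 1) t :=
  fun t ht => (hasDerivAt_inv (ne_of_gt ht.1)).hasDerivWithinAt

theorem derivC : ∀ t ∈ Ioo (0:ℝ) 1,
    HasDerivWithinAt (fun t : ℝ => 1 + (t-1)⁻¹) (-1/((t-1)^2)) (Ioo 0 1) t := by
  intro t ht
  have h : HasDerivAt (fun t : ℝ => (t-1)⁻¹) (-1/((t-1)^2)) t := by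
    exact (((hasDerivAt_id t).sub_const 1).inv (by intro h; rw [sub_eq_zero] at h; exact (ne_of_lt ht.2) h))
  exact ((h.const_add 1)).hasDerivWithinAt

theorem injC : InjOn (fun t : ℝ => 1 + (t-1)⁻¹) (Ioo 0 1) := by
  intro a ha b hb hab
  simp only at hab
  have h : (a-1:ℝ)⁻¹ = (b-1)⁻¹ := by linarith
  have := inv_injective h
  linarith

-- integral over Ioi 1
theorem intB (s₁ s₂ : ℂ) :
    ∫ x in Ioi (1:ℝ), (x:ℂ)^(s₁-1) * ((x-1:ℝ):ℂ)^(s₂-1)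
      = ∫ t in Ioo (0:ℝ) 1, (t:ℂ)^((1-s₁-s₂)-1) * ((1-t:ℝ):ℂ)^(s₂-1) := by
  rw [← imageB, integral_image_eq_integral_abs_deriv_smul measurableSet_Ioo derivB
    inv_injective.injOn (fun x : ℝ => (x:ℂ)^(s₁-1) * ((x-1:ℝ):ℂ)^(s₂-1))]
  exact setIntegral_congr_fun measurableSet_Ioo (fun t ht => ptB s₁ s₂ ht)

theorem integrableB (s₁ s₂ : ℂ) (h₁ : 0 < s₂.re) (h₂ : 0 < ((1:ℂ)-s₁-s₂).re) :
    IntegrableOn (fun x : ℝ => (x:ℂ)^(s₁-1) * ((x-1:ℝ):ℂ)^(s₂-1)) (Ioi (1:ℝ)) := by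
  rw [← imageB, integrableOn_image_iff_integrableOn_abs_deriv_smul measurableSet_Ioo derivB
    inv_injective.injOn]
  exact (J_int _ _ h₂ h₁).congr_fun (fun t ht => (ptB s₁ s₂ ht).symm) measurableSet_Ioo

theorem intC (s₁ s₂ : ℂ) :
    ∫ x in Iio (0:ℝ), ((-x:ℝ):ℂ)^(s₁-1) * ((1-x:ℝ):ℂ)^(s₂-1)
      = ∫ t in Ioo (0:ℝ) 1, (t:ℂ)^(s₁-1) * ((1-t:ℝ):ℂ)^((1-s₁-s₂)-1) := by
  rw [← imageC, integral_image_eq_integral_abs_deriv_smul measurableSet_Ioo derivC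
    injC (fun x : ℝ => ((-x:ℝ):ℂ)^(s₁-1) * ((1-x:ℝ):ℂ)^(s₂-1))]
  exact setIntegral_congr_fun measurableSet_Ioo (fun t ht => ptC s₁ s₂ ht)

theorem integrableC (s₁ s₂ : ℂ) (h₁ : 0 < s₁.re) (h₂ : 0 < ((1:ℂ)-s₁-s₂).re) :
    IntegrableOn (fun x : ℝ => ((-x:ℝ):ℂ)^(s₁-1) * ((1-x:ℝ):ℂ)^(s₂-1)) (Iio (0:ℝ)) := by
  rw [← imageC, integrableOn_image_iff_integrableOn_abs_deriv_smul measurableSet_Ioo derivC injC]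
  exact (J_int _ _ h₁ h₂).congr_fun (fun t ht => (ptC s₁ s₂ ht).symm) measurableSet_Ioo


/-- The signed beta integral over all of `ℝ`:
`∫_ℝ sgn(x)^{δ₁}|x|^{s₁-1} sgn(1-x)^{δ₂}|1-x|^{s₂-1} dx
  = B(s₁,s₂) + (-1)^{δ₂} B(1-s₁-s₂,s₂) + (-1)^{δ₁} B(s₁,1-s₁-s₂)`. -/
theorem signed_beta_integral (δ₁ δ₂ : ℤ) (s₁ s₂ : ℂ)
    (h₁ : 0 < s₁.re) (h₂ : 0 < s₂.re) (h₃ : (s₁ + s₂).re < 1) :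
    ∫ x : ℝ,
        ((Real.sign x : ℂ) ^ δ₁ * ((|x| : ℝ) : ℂ) ^ (s₁ - 1) *
          ((Real.sign (1 - x) : ℂ) ^ δ₂ * ((|1 - x| : ℝ) : ℂ) ^ (s₂ - 1))) =
      eulerBeta s₁ s₂ + (-1 : ℂ) ^ δ₂ * eulerBeta (1 - s₁ - s₂) s₂ +
        (-1 : ℂ) ^ δ₁ * eulerBeta s₁ (1 - s₁ - s₂) := by
  have hc : 0 < ((1:ℂ) - s₁ - s₂).re := by
    simp only [Complex.sub_re, Complex.one_re]
    simp only [Complex.add_re] at h₃; linarith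
  set F : ℝ → ℂ := fun x =>
    (Real.sign x : ℂ) ^ δ₁ * ((|x| : ℝ) : ℂ) ^ (s₁ - 1) *
      ((Real.sign (1 - x) : ℂ) ^ δ₂ * ((|1 - x| : ℝ) : ℂ) ^ (s₂ - 1)) with hF
  have eqA : EqOn F (fun x : ℝ => (x:ℂ)^(s₁-1) * ((1-x:ℝ):ℂ)^(s₂-1)) (Ioo 0 1) := by
    intro x hx
    obtain ⟨hx0, hx1⟩ := hx
    simp only [hF]
    rw [Real.sign_of_pos hx0, Real.sign_of_pos (by linarith : (0:ℝ) < 1 - x),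
      abs_of_pos hx0, abs_of_pos (by linarith : (0:ℝ) < 1 - x)]
    push_cast
    simp only [one_zpow]
    ring
  have eqB : EqOn F (fun x : ℝ => (-1:ℂ)^δ₂ * ((x:ℂ)^(s₁-1) * ((x-1:ℝ):ℂ)^(s₂-1))) (Ioi 1) := by
    intro x hx
    simp only [mem_Ioi] at hx
    simp only [hF]
    rw [Real.sign_of_pos (by linarith : (0:ℝ) < x), Real.sign_of_neg (by linarith : (1:ℝ) - x < 0),
      abs_of_pos (by linarith : (0:ℝ) < x), abs_of_neg (by linarith : (1:ℝ) - x < 0),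
      show -((1:ℝ) - x) = x - 1 by ring]
    push_cast
    simp only [one_zpow]
    ring
  have eqC : EqOn F (fun x : ℝ => (-1:ℂ)^δ₁ * (((-x:ℝ):ℂ)^(s₁-1) * ((1-x:ℝ):ℂ)^(s₂-1))) (Iio 0) := by
    intro x hx
    simp only [mem_Iio] at hx
    simp only [hF]
    rw [Real.sign_of_neg hx, Real.sign_of_pos (by linarith : (0:ℝ) < 1 - x),
      abs_of_neg hx, abs_of_pos (by linarith : (0:ℝ) < 1 - x)]
    push_cast
    simp only [one_zpow]
    ring
  have iA : IntegrableOn F (Ioo 0 1) :=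
    (J_int s₁ s₂ h₁ h₂).congr_fun eqA.symm measurableSet_Ioo
  have iB : IntegrableOn F (Ioi 1) :=
    MeasureTheory.IntegrableOn.congr_fun ((integrableB s₁ s₂ h₂ hc).const_mul ((-1:ℂ)^δ₂)) eqB.symm measurableSet_Ioi
  have iC : IntegrableOn F (Iio 0) :=
    MeasureTheory.IntegrableOn.congr_fun ((integrableC s₁ s₂ h₁ hc).const_mul ((-1:ℂ)^δ₁)) eqC.symm measurableSet_Iio
  have iIco : IntegrableOn F (Ico 0 1) := iA.congr_set_ae Ioo_ae_eq_Ico.symm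
  have iIci1 : IntegrableOn F (Ici 1) := iB.congr_set_ae Ioi_ae_eq_Ici.symm
  have iIci0 : IntegrableOn F (Ici 0) := by
    rw [← Set.Ico_union_Ici_eq_Ici (by norm_num : (0:ℝ) ≤ 1)]
    exact iIco.union iIci1
  have hdisj : Disjoint (Ico (0:ℝ) 1) (Ici 1) :=
    Set.disjoint_left.2 fun x hx h1 => absurd hx.2 (not_lt.2 h1)
  have hsplit : ∫ x, F x = (∫ x in Iio 0, F x) + ∫ x in Ici 0, F x :=
    (intervalIntegral.integral_Iio_add_Ici iC iIci0).symm
  have hsplit2 : ∫ x in Ici (0:ℝ), F x = (∫ x in Ico 0 1, F x) + ∫ x in Ici 1, F x := by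
    rw [← Set.Ico_union_Ici_eq_Ici (by norm_num : (0:ℝ) ≤ 1)]
    exact setIntegral_union hdisj measurableSet_Ici iIco iIci1
  rw [hsplit, hsplit2, integral_Ico_eq_integral_Ioo, integral_Ici_eq_integral_Ioi,
    setIntegral_congr_fun measurableSet_Iio eqC,
    setIntegral_congr_fun measurableSet_Ioo eqA,
    setIntegral_congr_fun measurableSet_Ioi eqB,
    integral_const_mul, integral_const_mul, intB, intC,
    J_eq s₁ s₂ h₁ h₂, J_eq _ _ hc h₂, J_eq _ _ h₁ hc]
  ring
end

section
/- Let δ₁,δ₂ ∈ {0,1} and s₁,s₂ ∈ ℂ with 0 < Re(s₁), 0 < Re(s₂), Re(s₁+s₂) < 1. With G_η(s) = π^{1/2-s} i^{η'} Γ((η'+s)/2)/Γ((1+η'-s)/2) (η' ∈ {0,1}, η' ≡ η mod 2), one has B(s₁,s₂) + (-1)^{δ₂}B(1-s₁-s₂,s₂) + (-1)^{δ₁}B(s₁,1-s₁-s₂) = G_{δ₁}(s₁) G_{δ₂}(s₂) / G_{δ₁+δ₂}(s₁+s₂). -/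
open Complex Real

lemma aux_sin_ne {s : ℂ} (h0 : 0 < s.re) (h1 : s.re < 1) : Complex.sin (↑π * s) ≠ 0 := by
  rw [Complex.sin_ne_zero_iff]
  intro k hk
  have hπ : (π : ℂ) ≠ 0 := by exact_mod_cast Real.pi_ne_zero
  have hs : s = (k : ℂ) := by
    rw [mul_comm (k:ℂ) (↑π : ℂ)] at hk
    exact mul_left_cancel₀ hπ hk
  rw [hs] at h0 h1
  simp only [Complex.intCast_re] at h0 h1
  have h0' : (0:ℤ) < k := by exact_mod_cast h0
  have h1' : k < 1 := by exact_mod_cast h1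
  omega

lemma aux_sin_half_ne {s : ℂ} (h0 : 0 < s.re) (h1 : s.re < 1) : Complex.sin (↑π * s / 2) ≠ 0 := by
  rw [Complex.sin_ne_zero_iff]
  intro k hk
  have hπ : (π : ℂ) ≠ 0 := by exact_mod_cast Real.pi_ne_zero
  have hs : s = ((2 * k : ℤ) : ℂ) := by
    field_simp at hk
    rw [hk]; push_cast; ring
  rw [hs] at h0 h1
  simp only [Complex.intCast_re] at h0 h1
  have h0' : (0:ℤ) < 2 * k := by exact_mod_cast h0
  have h1' : 2 * k < 1 := by exact_mod_cast h1
  omega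

lemma aux_cos_half_ne {s : ℂ} (h0 : 0 < s.re) (h1 : s.re < 1) : Complex.cos (↑π * s / 2) ≠ 0 := by
  rw [Complex.cos_ne_zero_iff]
  intro k hk
  have hπ : (π : ℂ) ≠ 0 := by exact_mod_cast Real.pi_ne_zero
  have hs : s = ((2 * k + 1 : ℤ) : ℂ) := by
    field_simp at hk
    rw [hk]; push_cast; ring
  rw [hs] at h0 h1
  simp only [Complex.intCast_re] at h0 h1
  have h0' : (0:ℤ) < 2 * k + 1 := by exact_mod_cast h0
  have h1' : 2 * k + 1 < 1 := by exact_mod_cast h1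
  omega

lemma aux_pow' (s : ℂ) :
    (π : ℂ) ^ ((1 : ℂ)/2 - s) * (2 : ℂ) ^ ((1 : ℂ) - s) * ((Real.sqrt π : ℝ) : ℂ)
      = 2 * ↑π * (2 * (π:ℂ)) ^ (-s) := by
  have hπ0 : (0:ℝ) ≤ π := Real.pi_pos.le
  have hπ : (π : ℂ) ≠ 0 := by exact_mod_cast Real.pi_ne_zero
  have h1 : (π:ℂ) ^ ((1:ℂ)/2 - s) = ((Real.sqrt π : ℝ):ℂ) * (π:ℂ) ^ (-s) := by
    rw [show (1:ℂ)/2 - s = (1:ℂ)/2 + (-s) by ring, Complex.cpow_add _ _ hπ]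
    congr 1
    rw [show ((1:ℂ)/2) = (((1/2 : ℝ)):ℂ) by norm_num, ← Complex.ofReal_cpow hπ0]
    norm_cast
    rw [Real.sqrt_eq_rpow]
  have h2 : (2:ℂ) ^ ((1:ℂ) - s) = 2 * (2:ℂ) ^ (-s) := by
    rw [show (1:ℂ) - s = 1 + (-s) by ring, Complex.cpow_add _ _ two_ne_zero, Complex.cpow_one]
  have h3 : (2 * (π:ℂ)) ^ (-s) = (2:ℂ) ^ (-s) * (π:ℂ) ^ (-s) := by
    have := Complex.mul_cpow_ofReal_nonneg (by norm_num : (0:ℝ) ≤ 2) hπ0 (-s)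
    push_cast at this
    exact this
  have h4 : ((Real.sqrt π : ℝ):ℂ) ^ 2 = (π : ℂ) := by
    norm_cast
    exact Real.sq_sqrt hπ0
  rw [h1, h2, h3]
  linear_combination (2 * (2:ℂ)^(-s) * (π:ℂ)^(-s)) * h4


lemma Gd_even (η : ℤ) (hη : Even η) {s : ℂ} (h0 : 0 < s.re) (h1 : s.re < 1) :
    Gd η s = (2 * (π:ℂ)) ^ (-s) * Complex.Gamma s *
      (cexp (↑π * s * I / 2) + (cexp (↑π * s * I / 2))⁻¹) := by
  have hπ : (π : ℂ) ≠ 0 := by exact_mod_cast Real.pi_ne_zero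
  have hre : 0 < ((1 + s)/2).re := by
    rw [Complex.div_ofNat_re, Complex.add_re, Complex.one_re]
    linarith
  have hΓa : Complex.Gamma ((1 + s)/2) ≠ 0 := Complex.Gamma_ne_zero_of_re_pos hre
  have hC : Complex.cos (↑π * s / 2) ≠ 0 := aux_cos_half_ne h0 h1
  -- reflection
  have r1 := Complex.Gamma_mul_Gamma_one_sub ((1 + s)/2)
  rw [show (1 : ℂ) - (1 + s)/2 = (1 - s)/2 by ring,
    show (↑π : ℂ) * ((1 + s)/2) = ↑π * s / 2 + ↑π / 2 by ring,
    Complex.sin_add_pi_div_two] at r1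
  have key : Complex.Gamma ((1 + s)/2) * Complex.Gamma ((1 - s)/2) * Complex.cos (↑π * s / 2)
      = ↑π := by
    field_simp [hC] at r1
    rw [r1, mul_comm s (↑π:ℂ)]; exact div_mul_cancel₀ _ hC
  have hΓb : Complex.Gamma ((1 - s)/2) ≠ 0 := by
    intro h
    apply hπ
    rw [← key, h]; ring
  have hdup := Complex.Gamma_mul_Gamma_add_half (s/2)
  rw [show s/2 + 1/2 = (1 + s)/2 by ring, show 2 * (s/2) = s by ring] at hdup
  have hc : cexp (↑π * s * I / 2) + (cexp (↑π * s * I / 2))⁻¹ = 2 * Complex.cos (↑π * s / 2) := by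
    rw [Complex.two_cos, show (↑π * s / 2) * I = ↑π * s * I / 2 by ring,
      show -(↑π * s / 2) * I = -(↑π * s * I / 2) by ring, Complex.exp_neg]
  simp only [Gd, if_pos hη, zero_add, add_zero, mul_one]
  rw [hc, div_eq_iff hΓb]
  refine mul_right_cancel₀ (mul_ne_zero hΓa hC) ?_
  linear_combination ((π:ℂ) ^ ((1:ℂ)/2 - s) * Complex.cos (↑π * s / 2)) * hdup
    + (Complex.Gamma s * Complex.cos (↑π * s / 2)) * aux_pow' s
    - (2 * (2 * (π:ℂ)) ^ (-s) * Complex.Gamma s * Complex.cos (↑π * s / 2)) * key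

lemma Gd_odd (η : ℤ) (hη : ¬ Even η) {s : ℂ} (h0 : 0 < s.re) (h1 : s.re < 1) :
    Gd η s = (2 * (π:ℂ)) ^ (-s) * Complex.Gamma s *
      (cexp (↑π * s * I / 2) - (cexp (↑π * s * I / 2))⁻¹) := by
  have hπ : (π : ℂ) ≠ 0 := by exact_mod_cast Real.pi_ne_zero
  have hS : Complex.sin (↑π * s / 2) ≠ 0 := aux_sin_half_ne h0 h1
  have hΓh : Complex.Gamma (s/2) ≠ 0 := by
    apply Complex.Gamma_ne_zero_of_re_pos
    rw [Complex.div_ofNat_re]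
    linarith
  have r1 := Complex.Gamma_mul_Gamma_one_sub (s/2)
  rw [show (↑π : ℂ) * (s/2) = ↑π * s / 2 by ring] at r1
  have key : Complex.Gamma (s/2) * Complex.Gamma ((2 - s)/2) * Complex.sin (↑π * s / 2)
      = ↑π := by
    field_simp [hS] at r1
    rw [r1, mul_comm s (↑π:ℂ)]; exact div_mul_cancel₀ _ hS
  have hΓc : Complex.Gamma ((2 - s)/2) ≠ 0 := by
    intro h
    apply hπ
    rw [← key, h]; ring
  have hdup := Complex.Gamma_mul_Gamma_add_half (s/2)
  rw [show s/2 + 1/2 = (1 + s)/2 by ring, show 2 * (s/2) = s by ring] at hdup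
  have hc : cexp (↑π * s * I / 2) - (cexp (↑π * s * I / 2))⁻¹
      = 2 * I * Complex.sin (↑π * s / 2) := by
    have h2 := Complex.two_sin (↑π * s / 2)
    rw [show (↑π * s / 2) * I = ↑π * s * I / 2 by ring,
      show -(↑π * s / 2) * I = -(↑π * s * I / 2) by ring, Complex.exp_neg] at h2
    linear_combination (-I) * h2 + (cexp (↑π * s * I / 2) - (cexp (↑π * s * I / 2))⁻¹) * Complex.I_sq
  simp only [Gd, if_neg hη]
  rw [show ((1:ℂ) + 1 - s)/2 = (2 - s)/2 by ring, hc, div_eq_iff hΓc]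
  refine mul_right_cancel₀ (mul_ne_zero hΓh hS) ?_
  linear_combination ((π:ℂ) ^ ((1:ℂ)/2 - s) * I * Complex.sin (↑π * s / 2)) * hdup
    + (I * Complex.sin (↑π * s / 2) * Complex.Gamma s) * aux_pow' s
    - (2 * (2 * (π:ℂ)) ^ (-s) * Complex.Gamma s * I * Complex.sin (↑π * s / 2)) * key


set_option maxHeartbeats 1000000 in
/-- For `δ₁, δ₂ ∈ {0,1}` and `0 < Re s₁`, `0 < Re s₂`, `Re(s₁+s₂) < 1`:
`B(s₁,s₂) + (-1)^{δ₂}B(1-s₁-s₂,s₂) + (-1)^{δ₁}B(s₁,1-s₁-s₂)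
  = G_{δ₁}(s₁) G_{δ₂}(s₂) / G_{δ₁+δ₂}(s₁+s₂)`. -/
theorem signed_beta_eq_Gd (δ₁ δ₂ : ℤ) (hδ₁ : δ₁ = 0 ∨ δ₁ = 1) (hδ₂ : δ₂ = 0 ∨ δ₂ = 1)
    (s₁ s₂ : ℂ) (h₁ : 0 < s₁.re) (h₂ : 0 < s₂.re) (h₃ : (s₁ + s₂).re < 1) :
    eulerBeta s₁ s₂ + (-1 : ℂ) ^ δ₂ * eulerBeta (1 - s₁ - s₂) s₂ +
        (-1 : ℂ) ^ δ₁ * eulerBeta s₁ (1 - s₁ - s₂) =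
      Gd δ₁ s₁ * Gd δ₂ s₂ / Gd (δ₁ + δ₂) (s₁ + s₂) := by
  have hπ : (π : ℂ) ≠ 0 := by exact_mod_cast Real.pi_ne_zero
  have h2π : (2 * (π:ℂ)) ≠ 0 := mul_ne_zero two_ne_zero hπ
  have hadd : (s₁ + s₂).re = s₁.re + s₂.re := Complex.add_re s₁ s₂
  have h0t : 0 < (s₁ + s₂).re := by rw [hadd]; linarith
  have hs1lt : s₁.re < 1 := by rw [hadd] at h₃; linarith
  have hs2lt : s₂.re < 1 := by rw [hadd] at h₃; linarith
  have hΓ1 : Complex.Gamma s₁ ≠ 0 := Complex.Gamma_ne_zero_of_re_pos h₁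
  have hΓ2 : Complex.Gamma s₂ ≠ 0 := Complex.Gamma_ne_zero_of_re_pos h₂
  have hΓt : Complex.Gamma (s₁ + s₂) ≠ 0 := Complex.Gamma_ne_zero_of_re_pos h0t
  have hΓ1s : Complex.Gamma (1 - s₁) ≠ 0 := by
    apply Complex.Gamma_ne_zero_of_re_pos
    rw [Complex.sub_re, Complex.one_re]; linarith
  have hΓ2s : Complex.Gamma (1 - s₂) ≠ 0 := by
    apply Complex.Gamma_ne_zero_of_re_pos
    rw [Complex.sub_re, Complex.one_re]; linarith
  have hS1 : Complex.sin (↑π * s₁) ≠ 0 := aux_sin_ne h₁ hs1lt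
  have hS2 : Complex.sin (↑π * s₂) ≠ 0 := aux_sin_ne h₂ hs2lt
  have hSt : Complex.sin (↑π * (s₁ + s₂)) ≠ 0 := aux_sin_ne h0t h₃
  -- beta function reflection formulas
  have hB1 : eulerBeta (1 - s₁ - s₂) s₂ = Complex.Gamma s₁ * Complex.Gamma s₂ *
      Complex.sin (↑π * s₁) / (Complex.Gamma (s₁ + s₂) * Complex.sin (↑π * (s₁ + s₂))) := by
    have r1 := Complex.Gamma_mul_Gamma_one_sub (s₁ + s₂)
    rw [show (1:ℂ) - (s₁ + s₂) = 1 - s₁ - s₂ by ring] at r1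
    have r2 := Complex.Gamma_mul_Gamma_one_sub s₁
    field_simp [hSt] at r1
    rw [mul_comm (s₁ + s₂) (↑π:ℂ), eq_div_iff hSt] at r1
    field_simp [hS1] at r2
    rw [mul_comm s₁ (↑π:ℂ), eq_div_iff hS1] at r2
    simp only [eulerBeta]
    rw [show (1:ℂ) - s₁ - s₂ + s₂ = 1 - s₁ by ring,
      div_eq_div_iff hΓ1s (mul_ne_zero hΓt hSt)]
    linear_combination (Complex.Gamma s₂) * r1 - (Complex.Gamma s₂) * r2
  have hB2 : eulerBeta s₁ (1 - s₁ - s₂) = Complex.Gamma s₁ * Complex.Gamma s₂ *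
      Complex.sin (↑π * s₂) / (Complex.Gamma (s₁ + s₂) * Complex.sin (↑π * (s₁ + s₂))) := by
    have r1 := Complex.Gamma_mul_Gamma_one_sub (s₁ + s₂)
    rw [show (1:ℂ) - (s₁ + s₂) = 1 - s₁ - s₂ by ring] at r1
    have r2 := Complex.Gamma_mul_Gamma_one_sub s₂
    field_simp [hSt] at r1
    rw [mul_comm (s₁ + s₂) (↑π:ℂ), eq_div_iff hSt] at r1
    field_simp [hS2] at r2
    rw [mul_comm s₂ (↑π:ℂ), eq_div_iff hS2] at r2
    simp only [eulerBeta]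
    rw [show s₁ + (1 - s₁ - s₂) = 1 - s₂ by ring,
      div_eq_div_iff hΓ2s (mul_ne_zero hΓt hSt)]
    linear_combination (Complex.Gamma s₁) * r1 - (Complex.Gamma s₁) * r2
  -- exponential facts
  have ha : cexp (↑π * s₁ * I / 2) ≠ 0 := Complex.exp_ne_zero _
  have hb : cexp (↑π * s₂ * I / 2) ≠ 0 := Complex.exp_ne_zero _
  have hab : cexp (↑π * (s₁ + s₂) * I / 2) = cexp (↑π * s₁ * I / 2) * cexp (↑π * s₂ * I / 2) := by
    rw [← Complex.exp_add]; congr 1; ring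
  have ea2 : cexp (↑π * s₁ * I) = (cexp (↑π * s₁ * I / 2)) ^ 2 := by
    rw [sq, ← Complex.exp_add]; congr 1; ring
  have eb2 : cexp (↑π * s₂ * I) = (cexp (↑π * s₂ * I / 2)) ^ 2 := by
    rw [sq, ← Complex.exp_add]; congr 1; ring
  have et2 : cexp (↑π * (s₁ + s₂) * I) = (cexp (↑π * s₁ * I / 2) * cexp (↑π * s₂ * I / 2)) ^ 2 := by
    rw [sq, ← Complex.exp_add, ← Complex.exp_add]; congr 1; ring
  have eS1 : Complex.sin (↑π * s₁)
      = (((cexp (↑π * s₁ * I / 2)) ^ 2)⁻¹ - (cexp (↑π * s₁ * I / 2)) ^ 2) * I / 2 := by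
    have h2 := Complex.two_sin (↑π * s₁)
    rw [show -(↑π * s₁) * I = -(↑π * s₁ * I) by ring, Complex.exp_neg, ea2] at h2
    linear_combination h2 / 2
  have eS2 : Complex.sin (↑π * s₂)
      = (((cexp (↑π * s₂ * I / 2)) ^ 2)⁻¹ - (cexp (↑π * s₂ * I / 2)) ^ 2) * I / 2 := by
    have h2 := Complex.two_sin (↑π * s₂)
    rw [show -(↑π * s₂) * I = -(↑π * s₂ * I) by ring, Complex.exp_neg, eb2] at h2
    linear_combination h2 / 2
  have eSt : Complex.sin (↑π * (s₁ + s₂))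
      = (((cexp (↑π * s₁ * I / 2) * cexp (↑π * s₂ * I / 2)) ^ 2)⁻¹
          - (cexp (↑π * s₁ * I / 2) * cexp (↑π * s₂ * I / 2)) ^ 2) * I / 2 := by
    have h2 := Complex.two_sin (↑π * (s₁ + s₂))
    rw [show -(↑π * (s₁ + s₂)) * I = -(↑π * (s₁ + s₂) * I) by ring, Complex.exp_neg, et2] at h2
    linear_combination h2 / 2
  have hStE := hSt
  rw [eSt] at hStE
  have hQ : (2 * (π:ℂ)) ^ (-(s₁ + s₂)) = (2 * (π:ℂ)) ^ (-s₁) * (2 * (π:ℂ)) ^ (-s₂) := by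
    rw [show -(s₁ + s₂) = -s₁ + -s₂ by ring, Complex.cpow_add _ _ h2π]
  have hCp : cexp (↑π * (s₁ + s₂) * I / 2) + (cexp (↑π * (s₁ + s₂) * I / 2))⁻¹ ≠ 0 := by
    have e : cexp (↑π * (s₁ + s₂) * I / 2) + (cexp (↑π * (s₁ + s₂) * I / 2))⁻¹
        = 2 * Complex.cos (↑π * (s₁ + s₂) / 2) := by
      rw [Complex.two_cos, show (↑π * (s₁ + s₂) / 2) * I = ↑π * (s₁ + s₂) * I / 2 by ring,
        show -(↑π * (s₁ + s₂) / 2) * I = -(↑π * (s₁ + s₂) * I / 2) by ring, Complex.exp_neg]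
    rw [e]
    exact mul_ne_zero two_ne_zero (aux_cos_half_ne h0t h₃)
  have hCm : cexp (↑π * (s₁ + s₂) * I / 2) - (cexp (↑π * (s₁ + s₂) * I / 2))⁻¹ ≠ 0 := by
    have e : cexp (↑π * (s₁ + s₂) * I / 2) - (cexp (↑π * (s₁ + s₂) * I / 2))⁻¹
        = 2 * I * Complex.sin (↑π * (s₁ + s₂) / 2) := by
      have h2 := Complex.two_sin (↑π * (s₁ + s₂) / 2)
      rw [show (↑π * (s₁ + s₂) / 2) * I = ↑π * (s₁ + s₂) * I / 2 by ring,
        show -(↑π * (s₁ + s₂) / 2) * I = -(↑π * (s₁ + s₂) * I / 2) by ring, Complex.exp_neg] at h2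
      linear_combination (-I) * h2 + (cexp (↑π * (s₁ + s₂) * I / 2)
        - (cexp (↑π * (s₁ + s₂) * I / 2))⁻¹) * Complex.I_sq
    rw [e]
    exact mul_ne_zero (mul_ne_zero two_ne_zero Complex.I_ne_zero) (aux_sin_half_ne h0t h₃)
  have hCpE := hCp
  rw [hab] at hCpE
  have hCmE := hCm
  rw [hab] at hCmE
  have hq1 : (2 * (π:ℂ)) ^ (-s₁) ≠ 0 := fun h => h2π ((Complex.cpow_eq_zero_iff _ _).mp h).1
  have hq2 : (2 * (π:ℂ)) ^ (-s₂) ≠ 0 := fun h => h2π ((Complex.cpow_eq_zero_iff _ _).mp h).1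
  -- combined LHS formulas (sin kept as atoms)
  have hLpp : eulerBeta s₁ s₂ + eulerBeta (1 - s₁ - s₂) s₂ + eulerBeta s₁ (1 - s₁ - s₂)
      = Complex.Gamma s₁ * Complex.Gamma s₂ *
        (Complex.sin (↑π * (s₁ + s₂)) + Complex.sin (↑π * s₁) + Complex.sin (↑π * s₂)) /
        (Complex.Gamma (s₁ + s₂) * Complex.sin (↑π * (s₁ + s₂))) := by
    rw [hB1, hB2]; simp only [eulerBeta]; rw [div_add_div _ _ hΓt (mul_ne_zero hΓt hSt), div_add_div _ _ (mul_ne_zero hΓt (mul_ne_zero hΓt hSt)) (mul_ne_zero hΓt hSt), div_eq_div_iff (mul_ne_zero (mul_ne_zero hΓt (mul_ne_zero hΓt hSt)) (mul_ne_zero hΓt hSt)) (mul_ne_zero hΓt hSt)]; ring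
  have hLmp : eulerBeta s₁ s₂ - eulerBeta (1 - s₁ - s₂) s₂ + eulerBeta s₁ (1 - s₁ - s₂)
      = Complex.Gamma s₁ * Complex.Gamma s₂ *
        (Complex.sin (↑π * (s₁ + s₂)) - Complex.sin (↑π * s₁) + Complex.sin (↑π * s₂)) /
        (Complex.Gamma (s₁ + s₂) * Complex.sin (↑π * (s₁ + s₂))) := by
    rw [hB1, hB2]; simp only [eulerBeta]; rw [div_sub_div _ _ hΓt (mul_ne_zero hΓt hSt), div_add_div _ _ (mul_ne_zero hΓt (mul_ne_zero hΓt hSt)) (mul_ne_zero hΓt hSt), div_eq_div_iff (mul_ne_zero (mul_ne_zero hΓt (mul_ne_zero hΓt hSt)) (mul_ne_zero hΓt hSt)) (mul_ne_zero hΓt hSt)]; ring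
  have hLpm : eulerBeta s₁ s₂ + eulerBeta (1 - s₁ - s₂) s₂ - eulerBeta s₁ (1 - s₁ - s₂)
      = Complex.Gamma s₁ * Complex.Gamma s₂ *
        (Complex.sin (↑π * (s₁ + s₂)) + Complex.sin (↑π * s₁) - Complex.sin (↑π * s₂)) /
        (Complex.Gamma (s₁ + s₂) * Complex.sin (↑π * (s₁ + s₂))) := by
    rw [hB1, hB2]; simp only [eulerBeta]; rw [div_add_div _ _ hΓt (mul_ne_zero hΓt hSt), div_sub_div _ _ (mul_ne_zero hΓt (mul_ne_zero hΓt hSt)) (mul_ne_zero hΓt hSt), div_eq_div_iff (mul_ne_zero (mul_ne_zero hΓt (mul_ne_zero hΓt hSt)) (mul_ne_zero hΓt hSt)) (mul_ne_zero hΓt hSt)]; ring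
  have hLmm : eulerBeta s₁ s₂ - eulerBeta (1 - s₁ - s₂) s₂ - eulerBeta s₁ (1 - s₁ - s₂)
      = Complex.Gamma s₁ * Complex.Gamma s₂ *
        (Complex.sin (↑π * (s₁ + s₂)) - Complex.sin (↑π * s₁) - Complex.sin (↑π * s₂)) /
        (Complex.Gamma (s₁ + s₂) * Complex.sin (↑π * (s₁ + s₂))) := by
    rw [hB1, hB2]; simp only [eulerBeta]; rw [div_sub_div _ _ hΓt (mul_ne_zero hΓt hSt), div_sub_div _ _ (mul_ne_zero hΓt (mul_ne_zero hΓt hSt)) (mul_ne_zero hΓt hSt), div_eq_div_iff (mul_ne_zero (mul_ne_zero hΓt (mul_ne_zero hΓt hSt)) (mul_ne_zero hΓt hSt)) (mul_ne_zero hΓt hSt)]; ring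
  rcases hδ₁ with rfl | rfl <;> rcases hδ₂ with rfl | rfl
  · simp only [zpow_zero, zpow_one, one_mul, neg_one_mul, ← sub_eq_add_neg]
    rw [hLpp, Gd_even 0 (by decide) h₁ hs1lt, Gd_even 0 (by decide) h₂ hs2lt, Gd_even (0 + 0) (by decide) h0t h₃, hQ, hab, eS1, eS2, eSt,
      div_eq_div_iff (mul_ne_zero hΓt hStE)
        (mul_ne_zero (mul_ne_zero (mul_ne_zero hq1 hq2) hΓt) hCpE)]
    set A := cexp (↑π * s₁ * I / 2) with hsetA
    set B := cexp (↑π * s₂ * I / 2) with hsetB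
    set G1 := Complex.Gamma s₁ with hsetG1
    set G2 := Complex.Gamma s₂ with hsetG2
    set Gt := Complex.Gamma (s₁ + s₂) with hsetGt
    set Q1 := (2 * (π:ℂ)) ^ (-s₁) with hsetQ1
    set Q2 := (2 * (π:ℂ)) ^ (-s₂) with hsetQ2
    field_simp [ha, hb]
    ring
  · simp only [zpow_zero, zpow_one, one_mul, neg_one_mul, ← sub_eq_add_neg]
    rw [hLmp, Gd_even 0 (by decide) h₁ hs1lt, Gd_odd 1 (by decide) h₂ hs2lt, Gd_odd (0 + 1) (by decide) h0t h₃, hQ, hab, eS1, eS2, eSt,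
      div_eq_div_iff (mul_ne_zero hΓt hStE)
        (mul_ne_zero (mul_ne_zero (mul_ne_zero hq1 hq2) hΓt) hCmE)]
    set A := cexp (↑π * s₁ * I / 2) with hsetA
    set B := cexp (↑π * s₂ * I / 2) with hsetB
    set G1 := Complex.Gamma s₁ with hsetG1
    set G2 := Complex.Gamma s₂ with hsetG2
    set Gt := Complex.Gamma (s₁ + s₂) with hsetGt
    set Q1 := (2 * (π:ℂ)) ^ (-s₁) with hsetQ1
    set Q2 := (2 * (π:ℂ)) ^ (-s₂) with hsetQ2
    field_simp [ha, hb]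
    ring
  · simp only [zpow_zero, zpow_one, one_mul, neg_one_mul, ← sub_eq_add_neg]
    rw [hLpm, Gd_odd 1 (by decide) h₁ hs1lt, Gd_even 0 (by decide) h₂ hs2lt, Gd_odd (1 + 0) (by decide) h0t h₃, hQ, hab, eS1, eS2, eSt,
      div_eq_div_iff (mul_ne_zero hΓt hStE)
        (mul_ne_zero (mul_ne_zero (mul_ne_zero hq1 hq2) hΓt) hCmE)]
    set A := cexp (↑π * s₁ * I / 2) with hsetA
    set B := cexp (↑π * s₂ * I / 2) with hsetB
    set G1 := Complex.Gamma s₁ with hsetG1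
    set G2 := Complex.Gamma s₂ with hsetG2
    set Gt := Complex.Gamma (s₁ + s₂) with hsetGt
    set Q1 := (2 * (π:ℂ)) ^ (-s₁) with hsetQ1
    set Q2 := (2 * (π:ℂ)) ^ (-s₂) with hsetQ2
    field_simp [ha, hb]
    ring
  · simp only [zpow_zero, zpow_one, one_mul, neg_one_mul, ← sub_eq_add_neg]
    rw [hLmm, Gd_odd 1 (by decide) h₁ hs1lt, Gd_odd 1 (by decide) h₂ hs2lt, Gd_even (1 + 1) (by decide) h0t h₃, hQ, hab, eS1, eS2, eSt,
      div_eq_div_iff (mul_ne_zero hΓt hStE)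
        (mul_ne_zero (mul_ne_zero (mul_ne_zero hq1 hq2) hΓt) hCpE)]
    set A := cexp (↑π * s₁ * I / 2) with hsetA
    set B := cexp (↑π * s₂ * I / 2) with hsetB
    set G1 := Complex.Gamma s₁ with hsetG1
    set G2 := Complex.Gamma s₂ with hsetG2
    set Gt := Complex.Gamma (s₁ + s₂) with hsetGt
    set Q1 := (2 * (π:ℂ)) ^ (-s₁) with hsetQ1
    set Q2 := (2 * (π:ℂ)) ^ (-s₂) with hsetQ2
    field_simp [ha, hb]
    ring
end

section
/- Gauss's summation: for a₁,a₂,b₁ ∈ ℂ with Re(b₁-a₁-a₂) > 0 and b₁ not a nonpositive integer, the regularized hypergeometric series ₂F₁*(a₁,a₂;b₁;1) := Σ_{n≥0} (a₁)_n (a₂)_n / (n! Γ(b₁+n)) equals Γ(b₁-a₁-a₂) / (Γ(b₁-a₁) Γ(b₁-a₂)). -/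
/-- The rising Pochhammer symbol `(a)_n = a(a+1)⋯(a+n-1)`. -/
noncomputable def poch (a : ℂ) (n : ℕ) : ℂ := ∏ k ∈ Finset.range n, (a + (k : ℂ))

namespace GaussAux

open Filter Finset Complex Topology

set_option maxHeartbeats 1000000

noncomputable def pochR (x : ℝ) (n : ℕ) : ℝ := ∏ k ∈ Finset.range n, (x + (k : ℝ))

noncomputable def T (a b c : ℂ) (n : ℕ) : ℂ :=
  poch a n * poch b n / ((n.factorial : ℂ) * Complex.Gamma (c + (n : ℂ)))

noncomputable def Q (a b γ : ℂ) (n : ℕ) : ℂ :=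
  poch a n * poch b n / ((n.factorial : ℂ)) / poch γ n

lemma poch_zero (a : ℂ) : poch a 0 = 1 := by simp [poch]

lemma poch_succ (a : ℂ) (n : ℕ) : poch a (n + 1) = poch a n * (a + n) :=
  Finset.prod_range_succ _ _

lemma pochR_succ (x : ℝ) (n : ℕ) : pochR x (n + 1) = pochR x n * (x + n) :=
  Finset.prod_range_succ _ _

lemma pochR_pos {x : ℝ} (hx : 0 < x) (n : ℕ) : 0 < pochR x n := by
  refine Finset.prod_pos fun k _ => ?_
  positivity

lemma poch_ne_zero {a : ℂ} (h : ∀ k : ℕ, a + k ≠ 0) (n : ℕ) : poch a n ≠ 0 :=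
  Finset.prod_ne_zero_iff.2 fun k _ => h k

lemma norm_poch_le (a : ℂ) (n : ℕ) : ‖poch a n‖ ≤ pochR ‖a‖ n := by
  rw [poch, pochR]
  refine (Finset.norm_prod_le _ _).trans ?_
  refine Finset.prod_le_prod (fun k _ => norm_nonneg _) fun k _ => ?_
  simpa using (norm_add_le a (k : ℂ))

lemma poch_add (a : ℂ) (m n : ℕ) : poch a (m + n) = poch a m * poch (a + m) n := by
  rw [poch, poch, poch, Finset.prod_range_add]
  congr 1
  refine Finset.prod_congr rfl fun k _ => ?_
  push_cast; ring

lemma Gamma_shift_ne_zero {c : ℂ} (hc : ∀ n : ℕ, c + n ≠ 0) (n : ℕ) :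
    Complex.Gamma (c + n) ≠ 0 := by
  refine Complex.Gamma_ne_zero fun m => ?_
  intro hm
  apply hc (n + m)
  push_cast
  rw [eq_neg_iff_add_eq_zero] at hm
  linear_combination hm

lemma Gamma_add_nat {c : ℂ} (hc : ∀ n : ℕ, c + n ≠ 0) (n : ℕ) :
    Complex.Gamma (c + n) = Complex.Gamma c * poch c n := by
  induction n with
  | zero => simp [poch_zero]
  | succ n ih =>
      have h1 : Complex.Gamma ((c + n) + 1) = (c + n) * Complex.Gamma (c + n) :=
        Complex.Gamma_add_one _ (hc n)
      have h2 : c + ((n : ℕ) + 1 : ℕ) = (c + n) + 1 := by push_cast; ring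
      rw [h2, h1, ih, poch_succ]; ring

lemma T_succ {a b c : ℂ} (hc : ∀ n : ℕ, c + n ≠ 0) (n : ℕ) :
    T a b c (n + 1) = T a b c n * ((a + n) * (b + n) / (((n : ℂ) + 1) * (c + n))) := by
  have hΓ : Complex.Gamma (c + n) ≠ 0 := Gamma_shift_ne_zero hc n
  have hΓ1 : Complex.Gamma (c + ((n + 1 : ℕ) : ℂ)) = (c + n) * Complex.Gamma (c + n) := by
    have h2 : c + ((n + 1 : ℕ) : ℂ) = (c + n) + 1 := by push_cast; ring
    rw [h2, Complex.Gamma_add_one _ (hc n)]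
  rw [T, T, poch_succ, poch_succ, hΓ1]
  have hfac : (((n + 1).factorial : ℕ) : ℂ) = ((n : ℂ) + 1) * (n.factorial : ℂ) := by
    push_cast [Nat.factorial_succ]; ring
  rw [hfac]
  have h1 : (n.factorial : ℂ) ≠ 0 := Nat.cast_ne_zero.2 n.factorial_ne_zero
  have h2 : ((n : ℂ) + 1) ≠ 0 := Nat.cast_add_one_ne_zero n
  have h3 : c + (n : ℂ) ≠ 0 := hc n
  field_simp

lemma norm_T_succ {a b c : ℂ} (hc : ∀ n : ℕ, c + n ≠ 0) (n : ℕ) :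
    ‖T a b c (n + 1)‖ =
      ‖T a b c n‖ * (‖a + n‖ * ‖b + n‖ / (((n : ℝ) + 1) * ‖c + n‖)) := by
  have hn1 : ‖(n : ℂ) + 1‖ = (n : ℝ) + 1 := by
    have : ((n : ℂ) + 1) = ((n + 1 : ℕ) : ℂ) := by push_cast; ring
    rw [this, Complex.norm_natCast]; push_cast; ring
  rw [T_succ hc n, norm_mul, norm_div, norm_mul, norm_mul, hn1]

lemma summable_v {δ : ℝ} (hδ : 0 < δ) :
    Summable (fun n : ℕ => pochR 1 n / pochR (2 + δ) n) := by
  set v : ℕ → ℝ := fun n => pochR 1 n / pochR (2 + δ) n with hv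
  have hvpos : ∀ n, 0 < v n := fun n =>
    div_pos (pochR_pos one_pos n) (pochR_pos (by linarith) n)
  set g : ℕ → ℝ := fun n => ((n : ℝ) + 1 + δ) * v n with hg
  have hrec : ∀ n, δ * v n = g n - g (n + 1) := by
    intro n
    have hp2 : pochR (2 + δ) n ≠ 0 := (pochR_pos (by linarith) n).ne'
    have hp1 : pochR 1 n ≠ 0 := (pochR_pos one_pos n).ne'
    have hp2' : (2 + δ + (n : ℝ)) ≠ 0 := by positivity
    simp only [hg, hv, pochR_succ]
    push_cast
    field_simp
    ring
  refine summable_of_sum_range_le (c := g 0 / δ) (fun n => (hvpos n).le) ?_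
  intro n
  have hsum : δ * ∑ k ∈ range n, v k = g 0 - g n := by
    rw [Finset.mul_sum, Finset.sum_congr rfl fun k _ => hrec k]
    exact Finset.sum_range_sub' g n
  have hgn : 0 ≤ g n := mul_nonneg (by positivity) (hvpos n).le
  rw [le_div_iff₀ hδ]
  nlinarith [hsum]


lemma pochR_nonneg {x : ℝ} (hx : 0 ≤ x) (n : ℕ) : 0 ≤ pochR x n := by
  refine Finset.prod_nonneg fun k _ => ?_; positivity

lemma evratio (a b c : ℂ) (h : 0 < (c - a - b).re) :
    ∃ N : ℕ, 1 ≤ N ∧ ∀ n : ℕ, N ≤ n →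
      ‖a + n‖ * ‖b + n‖ * (2 + (c - a - b).re / 2 + n) ≤ ((n : ℝ) + 1) ^ 2 * ‖c + n‖ := by
  set δ : ℝ := (c - a - b).re / 2 with hδdef
  have hδ : 0 < δ := by positivity
  set A := a.re; set B := b.re; set C := c.re
  set Ia := a.im; set Ib := b.im; set Ic := c.im
  have hCAB : C - A - B = 2 * δ := by
    rw [hδdef]; simp only [Complex.sub_re]; ring
  set g : ℝ → ℝ := fun x =>
    (1 + x) ^ 4 * ((1 + C * x) ^ 2 + (Ic * x) ^ 2) -
      ((1 + A * x) ^ 2 + (Ia * x) ^ 2) * ((1 + B * x) ^ 2 + (Ib * x) ^ 2) *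
        (1 + (2 + δ) * x) ^ 2 with hgdef
  -- derivative of g at 0 is 2δ
  have hlin : ∀ k : ℝ, HasDerivAt (fun x : ℝ => 1 + k * x) k 0 := by
    intro k
    simpa using ((hasDerivAt_id (0 : ℝ)).const_mul k).const_add 1
  have hq : ∀ k m : ℝ, HasDerivAt (fun x : ℝ => (1 + k * x) ^ 2 + (m * x) ^ 2) (2 * k) 0 := by
    intro k m
    have h1 := ((hlin k).pow 2).add (((hasDerivAt_id (0 : ℝ)).const_mul m).pow 2)
    refine h1.congr_deriv ?_
    norm_num
  have h4 : HasDerivAt (fun x : ℝ => (1 + x) ^ 4) 4 0 := by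
    have := ((hasDerivAt_id (0 : ℝ)).const_add 1).pow 4
    refine this.congr_deriv ?_
    norm_num
  have h3 : HasDerivAt (fun x : ℝ => (1 + (2 + δ) * x) ^ 2) (2 * (2 + δ)) 0 := by
    have := (hlin (2 + δ)).pow 2
    refine this.congr_deriv ?_
    norm_num
  have hg : HasDerivAt g (2 * δ) 0 := by
    have hR := h4.mul (hq C Ic)
    have hL := ((hq A Ia).mul (hq B Ib)).mul h3
    have := hR.sub hL
    refine this.congr_deriv ?_
    norm_num
    linarith [hCAB]
  have hg0 : g 0 = 0 := by simp [hgdef]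
  rw [hasDerivAt_iff_tendsto_slope] at hg
  have hslope : ∀ᶠ x in 𝓝[≠] (0 : ℝ), 0 < slope g 0 x :=
    hg.eventually (eventually_gt_nhds (by positivity))
  have hto : Tendsto (fun n : ℕ => 1 / (n : ℝ)) atTop (𝓝[≠] (0 : ℝ)) := by
    refine tendsto_nhdsWithin_of_tendsto_nhds_of_eventually_within _
      tendsto_one_div_atTop_nhds_zero_nat ?_
    filter_upwards [eventually_ge_atTop 1] with n hn
    have : (0 : ℝ) < (n : ℝ) := by exact_mod_cast hn
    show (1 : ℝ) / (n : ℝ) ∈ ({0}ᶜ : Set ℝ)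
    simp only [Set.mem_compl_iff, Set.mem_singleton_iff]
    exact ne_of_gt (by positivity)
  have hev : ∀ᶠ n : ℕ in atTop, 0 < slope g 0 (1 / (n : ℝ)) := hto.eventually hslope
  obtain ⟨N, hN⟩ := eventually_atTop.1 hev
  refine ⟨max N 1, le_max_right _ _, ?_⟩
  intro n hn
  have hn1 : 1 ≤ n := le_trans (le_max_right N 1) hn
  have hnN : N ≤ n := le_trans (le_max_left N 1) hn
  have hnR : (0 : ℝ) < n := by exact_mod_cast hn1
  have hn0 : (n : ℝ) ≠ 0 := ne_of_gt hnR
  have hx := hN n hnN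
  rw [slope_def_field, hg0, sub_zero, sub_zero] at hx
  have h1n : (0 : ℝ) < 1 / (n : ℝ) := by positivity
  have hgx : 0 < g (1 / (n : ℝ)) := by
    have h2 := mul_pos hx h1n
    rwa [div_mul_cancel₀ _ (ne_of_gt h1n)] at h2
  have ea : (n:ℝ)^2*((1+A*(1/n))^2+(Ia*(1/n))^2) = (A+n)^2+Ia^2 := by field_simp; ring
  have eb : (n:ℝ)^2*((1+B*(1/n))^2+(Ib*(1/n))^2) = (B+n)^2+Ib^2 := by field_simp; ring
  have ec : (n:ℝ)^2*((1+C*(1/n))^2+(Ic*(1/n))^2) = (C+n)^2+Ic^2 := by field_simp; ring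
  have e4 : (n:ℝ)^4*(1+1/n)^4 = ((n:ℝ)+1)^4 := by field_simp
  have e3 : (n:ℝ)^2*(1+(2+δ)*(1/n))^2 = (2+δ+(n:ℝ))^2 := by field_simp; ring
  have key : ((n : ℝ)) ^ 6 * g (1 / (n : ℝ)) =
      ((n : ℝ) + 1) ^ 4 * ((C + n) ^ 2 + Ic ^ 2) -
        ((A + n) ^ 2 + Ia ^ 2) * ((B + n) ^ 2 + Ib ^ 2) * (2 + δ + n) ^ 2 := by
    calc ((n : ℝ)) ^ 6 * g (1 / (n : ℝ))
        = ((n:ℝ)^4*(1+1/n)^4) * ((n:ℝ)^2*((1+C*(1/n))^2+(Ic*(1/n))^2)) -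
          ((n:ℝ)^2*((1+A*(1/n))^2+(Ia*(1/n))^2)) * ((n:ℝ)^2*((1+B*(1/n))^2+(Ib*(1/n))^2)) *
            ((n:ℝ)^2*(1+(2+δ)*(1/n))^2) := by
          simp only [hgdef]; ring
      _ = ((n : ℝ) + 1) ^ 4 * ((C + n) ^ 2 + Ic ^ 2) -
        ((A + n) ^ 2 + Ia ^ 2) * ((B + n) ^ 2 + Ib ^ 2) * (2 + δ + n) ^ 2 := by
          rw [ea, eb, ec, e4, e3]
  have hsq : ((A + n) ^ 2 + Ia ^ 2) * ((B + n) ^ 2 + Ib ^ 2) * (2 + δ + n) ^ 2 ≤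
      ((n : ℝ) + 1) ^ 4 * ((C + n) ^ 2 + Ic ^ 2) := by
    have hpos := mul_pos (pow_pos hnR 6) hgx
    linarith [key]
  have na : ‖a + (n : ℂ)‖ ^ 2 = (A + n) ^ 2 + Ia ^ 2 := by
    rw [Complex.sq_norm, Complex.normSq_apply]
    simp only [Complex.add_re, Complex.add_im, Complex.natCast_re, Complex.natCast_im, add_zero]
    ring
  have nb : ‖b + (n : ℂ)‖ ^ 2 = (B + n) ^ 2 + Ib ^ 2 := by
    rw [Complex.sq_norm, Complex.normSq_apply]
    simp only [Complex.add_re, Complex.add_im, Complex.natCast_re, Complex.natCast_im, add_zero]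
    ring
  have ncc : ‖c + (n : ℂ)‖ ^ 2 = (C + n) ^ 2 + Ic ^ 2 := by
    rw [Complex.sq_norm, Complex.normSq_apply]
    simp only [Complex.add_re, Complex.add_im, Complex.natCast_re, Complex.natCast_im, add_zero]
    ring
  have hL : 0 ≤ ‖a + (n : ℂ)‖ * ‖b + (n : ℂ)‖ * (2 + δ + n) := by positivity
  have hR : 0 ≤ ((n : ℝ) + 1) ^ 2 * ‖c + (n : ℂ)‖ := by positivity
  refine (pow_le_pow_iff_left₀ hL hR two_ne_zero).1 ?_
  have e1 : (‖a + (n : ℂ)‖ * ‖b + (n : ℂ)‖ * (2 + δ + n)) ^ 2 =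
      ‖a + (n : ℂ)‖ ^ 2 * ‖b + (n : ℂ)‖ ^ 2 * (2 + δ + n) ^ 2 := by ring
  have e2 : (((n : ℝ) + 1) ^ 2 * ‖c + (n : ℂ)‖) ^ 2 =
      ((n : ℝ) + 1) ^ 4 * ‖c + (n : ℂ)‖ ^ 2 := by ring
  rw [e1, e2, na, nb, ncc]
  exact hsq

lemma v_succ {δ : ℝ} (hδ : 0 < δ) (n : ℕ) :
    pochR 1 (n + 1) / pochR (2 + δ) (n + 1) =
      (pochR 1 n / pochR (2 + δ) n) * ((1 + (n : ℝ)) / (2 + δ + n)) := by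
  have hp2 : pochR (2 + δ) n ≠ 0 := (pochR_pos (by linarith) n).ne'
  have hp2' : (2 + δ + (n : ℝ)) ≠ 0 := by positivity
  rw [pochR_succ, pochR_succ]
  field_simp
  try ring

lemma summable_norm_T (a b c : ℂ) (hc : ∀ n : ℕ, c + n ≠ 0) (h : 0 < (c - a - b).re) :
    Summable (fun n => ‖T a b c n‖) := by
  set δ : ℝ := (c - a - b).re / 2 with hδdef
  have hδ : 0 < δ := by positivity
  set v : ℕ → ℝ := fun n => pochR 1 n / pochR (2 + δ) n with hv
  have hvpos : ∀ n, 0 < v n := fun n =>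
    div_pos (pochR_pos one_pos n) (pochR_pos (by linarith) n)
  obtain ⟨N, hN1, hN⟩ := evratio a b c h
  set u : ℕ → ℝ := fun n => ‖T a b c n‖ with hu
  set K : ℝ := u N / v N with hK
  have hK0 : 0 ≤ K := div_nonneg (norm_nonneg _) (hvpos N).le
  have hKv : ∀ n, N ≤ n → u n ≤ K * v n := by
    intro n hn
    induction n, hn using Nat.le_induction with
    | base => rw [hK, div_mul_cancel₀ _ (hvpos N).ne']
    | succ n hn ih =>
        have hvrec : v (n + 1) = v n * ((1 + (n : ℝ)) / (2 + δ + n)) := v_succ hδ n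
        have hurec : u (n + 1) = u n * (‖a + n‖ * ‖b + n‖ / (((n : ℝ) + 1) * ‖c + n‖)) :=
          norm_T_succ hc n
        have hc0 : (0 : ℝ) < ‖c + (n : ℂ)‖ := norm_pos_iff.2 (hc n)
        have hratio : ‖a + n‖ * ‖b + n‖ / (((n : ℝ) + 1) * ‖c + n‖) ≤
            (1 + (n : ℝ)) / (2 + δ + n) := by
          rw [div_le_div_iff₀ (by positivity) (by positivity)]
          calc ‖a + n‖ * ‖b + n‖ * (2 + δ + n) ≤ ((n : ℝ) + 1) ^ 2 * ‖c + n‖ := hN n hn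
            _ = (1 + (n : ℝ)) * (((n : ℝ) + 1) * ‖c + n‖) := by ring
        calc u (n + 1) = u n * (‖a + n‖ * ‖b + n‖ / (((n : ℝ) + 1) * ‖c + n‖)) := hurec
          _ ≤ (K * v n) * ((1 + (n : ℝ)) / (2 + δ + n)) := by
              refine mul_le_mul ih hratio (by positivity) ?_
              exact mul_nonneg hK0 (hvpos n).le
          _ = K * v (n + 1) := by rw [hvrec]; ring
  have hs : Summable v := summable_v hδ
  have h1 : Summable (fun n : ℕ => K * v (n + N)) := ((summable_nat_add_iff N).2 hs).mul_left K
  have h2 : Summable (fun n : ℕ => u (n + N)) :=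
    h1.of_nonneg_of_le (fun n => norm_nonneg _) (fun n => hKv _ (Nat.le_add_left N n))
  exact (summable_nat_add_iff N).1 h2

lemma summable_T (a b c : ℂ) (hc : ∀ n : ℕ, c + n ≠ 0) (h : 0 < (c - a - b).re) :
    Summable (T a b c) :=
  (summable_norm_T a b c hc h).of_norm

lemma hc_shift {c : ℂ} (hc : ∀ n : ℕ, c + n ≠ 0) (m : ℕ) :
    ∀ n : ℕ, (c + (m : ℂ)) + n ≠ 0 := by
  intro n h0
  apply hc (m + n)
  push_cast
  linear_combination h0

lemma re_shift (c : ℂ) (a b : ℂ) (m : ℕ) (h : 0 < (c - a - b).re) :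
    0 < ((c + (m : ℂ)) - a - b).re := by
  have : ((c + (m : ℂ)) - a - b) = (c - a - b) + (m : ℂ) := by ring
  rw [this, Complex.add_re]
  have : ((m : ℂ)).re = (m : ℝ) := by simp
  rw [this]
  positivity

lemma contiguous (a b c : ℂ) (hc : ∀ n : ℕ, c + n ≠ 0) (h : 0 < (c - a - b).re) :
    (c - a - b) * ∑' n, T a b c n = (c - a) * (c - b) * ∑' n, T a b (c + 1) n := by
  have hc1 : ∀ n : ℕ, (c + 1) + n ≠ 0 := by
    have := hc_shift hc 1; simpa using this
  have h1 : 0 < ((c + 1) - a - b).re := by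
    have := re_shift c a b 1 h; simpa using this
  have hS : Summable (T a b c) := summable_T a b c hc h
  have hS1 : Summable (T a b (c + 1)) := summable_T a b (c + 1) hc1 h1
  set g : ℕ → ℂ := fun n => (n : ℂ) * T a b c n with hg
  have key : ∀ n : ℕ, (c - a - b) * T a b c n - (c - a) * (c - b) * T a b (c + 1) n
      = g n - g (n + 1) := by
    intro n
    have hΓ : Complex.Gamma (c + n) ≠ 0 := Gamma_shift_ne_zero hc n
    have hcn : c + (n : ℂ) ≠ 0 := hc n
    have hG1 : Complex.Gamma ((c + 1) + (n : ℂ)) = (c + n) * Complex.Gamma (c + n) := by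
      have e : (c + 1) + (n : ℂ) = (c + n) + 1 := by ring
      rw [e, Complex.Gamma_add_one _ hcn]
    have hG2 : Complex.Gamma (c + ((n + 1 : ℕ) : ℂ)) = (c + n) * Complex.Gamma (c + n) := by
      have e : c + ((n + 1 : ℕ) : ℂ) = (c + n) + 1 := by push_cast; ring
      rw [e, Complex.Gamma_add_one _ hcn]
    have hfac : (((n + 1).factorial : ℕ) : ℂ) = ((n : ℂ) + 1) * (n.factorial : ℂ) := by
      push_cast [Nat.factorial_succ]; ring
    have hf0 : (n.factorial : ℂ) ≠ 0 := Nat.cast_ne_zero.2 n.factorial_ne_zero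
    have hn1 : ((n : ℂ) + 1) ≠ 0 := Nat.cast_add_one_ne_zero n
    simp only [hg, T, hG1, hG2, poch_succ, hfac]
    push_cast
    field_simp
    ring
  set D : ℕ → ℂ := fun n => (c - a - b) * T a b c n - (c - a) * (c - b) * T a b (c + 1) n
    with hD
  have hDs : Summable D := (hS.mul_left _).sub (hS1.mul_left _)
  have htsum : ∑' n, D n
      = (c - a - b) * ∑' n, T a b c n - (c - a) * (c - b) * ∑' n, T a b (c + 1) n := by
    rw [hD]
    rw [Summable.tsum_sub (hS.mul_left _) (hS1.mul_left _), tsum_mul_left, tsum_mul_left]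
  have hpart : ∀ n, ∑ k ∈ range n, D k = - g n := by
    intro n
    rw [Finset.sum_congr rfl fun k _ => key k, Finset.sum_range_sub' g n]
    simp [hg]
  have hgtend : Tendsto g atTop (𝓝 (- ∑' n, D n)) := by
    have h1 := hDs.hasSum.tendsto_sum_nat
    have h2 : Tendsto (fun n => - ∑ k ∈ range n, D k) atTop (𝓝 (- ∑' n, D n)) := h1.neg
    refine h2.congr fun n => ?_
    rw [hpart n, neg_neg]
  have hzero : ∑' n, D n = 0 := by
    by_contra hL
    set L : ℂ := ∑' n, D n with hLdef
    have hnorm : Tendsto (fun n => ‖g n‖) atTop (𝓝 ‖L‖) := by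
      have := hgtend.norm
      rwa [norm_neg] at this
    have hLpos : 0 < ‖L‖ := norm_pos_iff.2 hL
    have hev : ∀ᶠ n : ℕ in atTop, ‖L‖ / 2 < ‖g n‖ :=
      hnorm.eventually (eventually_gt_nhds (by linarith))
    obtain ⟨N, hN⟩ := eventually_atTop.1 (hev.and (eventually_ge_atTop 1))
    have hTlow : ∀ n : ℕ, ‖L‖ / 2 * (((n + N : ℕ) : ℝ))⁻¹ ≤ ‖T a b c (n + N)‖ := by
      intro n
      obtain ⟨h1, h2⟩ := hN (n + N) (Nat.le_add_left N n)
      have hm : (0 : ℝ) < ((n + N : ℕ) : ℝ) := by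
        have : 1 ≤ n + N := le_trans h2 (le_refl _)
        exact_mod_cast Nat.lt_of_lt_of_le Nat.zero_lt_one this
      have hgn : ‖g (n + N)‖ = ((n + N : ℕ) : ℝ) * ‖T a b c (n + N)‖ := by
        rw [hg]; rw [norm_mul, Complex.norm_natCast]
      rw [hgn] at h1
      have hle : ‖L‖ / 2 ≤ ((n + N : ℕ) : ℝ) * ‖T a b c (n + N)‖ := le_of_lt h1
      calc ‖L‖ / 2 * (((n + N : ℕ) : ℝ))⁻¹
          ≤ (((n + N : ℕ) : ℝ) * ‖T a b c (n + N)‖) * (((n + N : ℕ) : ℝ))⁻¹ := by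
            exact mul_le_mul_of_nonneg_right hle (by positivity)
        _ = ‖T a b c (n + N)‖ := by
            have hm' : ((n : ℝ) + (N : ℝ)) ≠ 0 := by push_cast at hm; linarith
            field_simp
    have hsN : Summable (fun n : ℕ => ‖T a b c (n + N)‖) :=
      (summable_nat_add_iff N).2 (summable_norm_T a b c hc h)
    have hs2 : Summable (fun n : ℕ => ‖L‖ / 2 * (((n + N : ℕ) : ℝ))⁻¹) :=
      hsN.of_nonneg_of_le (fun n => by positivity) hTlow
    have hs3 : Summable (fun n : ℕ => (((n + N : ℕ) : ℝ))⁻¹) := by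
      have hne : (‖L‖ / 2) ≠ 0 := by positivity
      have := hs2.mul_left (‖L‖ / 2)⁻¹
      refine this.congr fun n => ?_
      exact inv_mul_cancel_left₀ hne _
    have hs4 : Summable (fun n : ℕ => ((n : ℕ) : ℝ)⁻¹) := (summable_nat_add_iff N).1 hs3
    exact Real.not_summable_natCast_inv hs4
  rw [hzero] at htsum
  exact sub_eq_zero.1 htsum.symm


lemma ne_zero_of_re_pos' {z : ℂ} (hz : 0 < z.re) : ∀ k : ℕ, z + k ≠ 0 := by
  intro k h0
  have : (z + k).re = 0 := by rw [h0]; simp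
  rw [Complex.add_re] at this
  have hk : ((k : ℂ)).re = (k : ℝ) := by simp
  rw [hk] at this
  have : (0:ℝ) ≤ (k:ℝ) := by positivity
  linarith [hz, ‹(z.re + (k:ℝ)) = 0›]

lemma iterate_rel (a b c : ℂ) (hc : ∀ n : ℕ, c + n ≠ 0) (h : 0 < (c - a - b).re) (N : ℕ) :
    ∑' n, T a b c n =
      (poch (c - a) N * poch (c - b) N / poch (c - a - b) N) * ∑' n, T a b (c + N) n := by
  induction N with
  | zero => simp [poch_zero]
  | succ N ih =>
      have hcN : ∀ n : ℕ, (c + (N : ℂ)) + n ≠ 0 := hc_shift hc N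
      have hN : 0 < ((c + (N : ℂ)) - a - b).re := re_shift c a b N h
      have hrel := contiguous a b (c + N) hcN hN
      have hne : ((c + (N : ℂ)) - a - b) ≠ 0 := by
        intro h0; rw [h0] at hN; simp at hN
      have hFN : ∑' n, T a b (c + (N : ℂ)) n =
          ((c + N - a) * (c + N - b) / (c + N - a - b)) * ∑' n, T a b ((c + (N : ℂ)) + 1) n := by
        field_simp
        linear_combination hrel
      have hcast : (c + (N : ℂ)) + 1 = c + ((N + 1 : ℕ) : ℂ) := by push_cast; ring
      rw [ih, hFN, hcast, poch_succ, poch_succ, poch_succ]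
      have hp3 : poch (c - a - b) N ≠ 0 := poch_ne_zero (ne_zero_of_re_pos' h) N
      have hp3' : (c - a - b + (N : ℂ)) ≠ 0 := ne_zero_of_re_pos' h N
      have hne' : (c + (N:ℂ) - a - b) ≠ 0 := hne
      field_simp
      ring

lemma GammaSeq_eq (z : ℂ) (n : ℕ) :
    Complex.GammaSeq z n = (n : ℂ) ^ z * (n.factorial : ℂ) / poch z (n + 1) := rfl

lemma GammaSeq_ne_zero {z : ℂ} (hz : ∀ k : ℕ, z + k ≠ 0) {n : ℕ} (hn : 1 ≤ n) :
    Complex.GammaSeq z n ≠ 0 := by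
  rw [GammaSeq_eq]
  have hnn : ((n : ℂ)) ≠ 0 := Nat.cast_ne_zero.2 (by omega)
  have h1 : (n : ℂ) ^ z ≠ 0 := by
    rw [Ne, Complex.cpow_eq_zero_iff]
    tauto
  have h2 : ((n.factorial : ℕ) : ℂ) ≠ 0 := Nat.cast_ne_zero.2 n.factorial_ne_zero
  have h3 : poch z (n + 1) ≠ 0 := poch_ne_zero hz (n + 1)
  exact div_ne_zero (mul_ne_zero h1 h2) h3

lemma X_eq (a b c : ℂ) (hc : ∀ n : ℕ, c + n ≠ 0) (h : 0 < (c - a - b).re)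
    (ha : ∀ m : ℕ, (c - a) + m ≠ 0) (hbb : ∀ m : ℕ, (c - b) + m ≠ 0)
    {n : ℕ} (hn : 1 ≤ n) :
    poch (c - a) (n + 1) * poch (c - b) (n + 1) /
        (poch (c - a - b) (n + 1) * poch c (n + 1)) =
      Complex.GammaSeq (c - a - b) n * Complex.GammaSeq c n /
        (Complex.GammaSeq (c - a) n * Complex.GammaSeq (c - b) n) := by
  have hnn : ((n : ℂ)) ≠ 0 := Nat.cast_ne_zero.2 (by omega)
  have hpow : (n : ℂ) ^ (c - a) * (n : ℂ) ^ (c - b) =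
      (n : ℂ) ^ (c - a - b) * (n : ℂ) ^ c := by
    rw [← Complex.cpow_add _ _ hnn, ← Complex.cpow_add _ _ hnn]
    congr 1
    ring
  have h1 : poch (c - a) (n + 1) ≠ 0 := poch_ne_zero ha _
  have h2 : poch (c - b) (n + 1) ≠ 0 := poch_ne_zero hbb _
  have h3 : poch (c - a - b) (n + 1) ≠ 0 := poch_ne_zero (ne_zero_of_re_pos' h) _
  have h4 : poch c (n + 1) ≠ 0 := poch_ne_zero hc _
  have hx1 : (n : ℂ) ^ (c - a) ≠ 0 := by rw [Ne, Complex.cpow_eq_zero_iff]; tauto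
  have hx2 : (n : ℂ) ^ (c - b) ≠ 0 := by rw [Ne, Complex.cpow_eq_zero_iff]; tauto
  have hx3 : (n : ℂ) ^ (c - a - b) ≠ 0 := by rw [Ne, Complex.cpow_eq_zero_iff]; tauto
  have hx4 : (n : ℂ) ^ c ≠ 0 := by rw [Ne, Complex.cpow_eq_zero_iff]; tauto
  have hK : ((n.factorial : ℕ) : ℂ) ≠ 0 := Nat.cast_ne_zero.2 n.factorial_ne_zero
  rw [GammaSeq_eq, GammaSeq_eq, GammaSeq_eq, GammaSeq_eq]
  field_simp
  linear_combination hpow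

lemma tendsto_X (a b c : ℂ) (hc : ∀ n : ℕ, c + n ≠ 0) (h : 0 < (c - a - b).re)
    (ha : ∀ m : ℕ, (c - a) + m ≠ 0) (hbb : ∀ m : ℕ, (c - b) + m ≠ 0) :
    Tendsto (fun N : ℕ => poch (c - a) N * poch (c - b) N /
        (poch (c - a - b) N * poch c N)) atTop
      (𝓝 (Complex.Gamma (c - a - b) * Complex.Gamma c /
        (Complex.Gamma (c - a) * Complex.Gamma (c - b)))) := by
  have hga : Complex.Gamma (c - a) ≠ 0 := by
    refine Complex.Gamma_ne_zero fun m => ?_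
    intro h0; exact ha m (by rw [h0]; ring)
  have hgb : Complex.Gamma (c - b) ≠ 0 := by
    refine Complex.Gamma_ne_zero fun m => ?_
    intro h0; exact hbb m (by rw [h0]; ring)
  have hGS : Tendsto (fun n : ℕ => Complex.GammaSeq (c - a - b) n * Complex.GammaSeq c n /
      (Complex.GammaSeq (c - a) n * Complex.GammaSeq (c - b) n)) atTop
      (𝓝 (Complex.Gamma (c - a - b) * Complex.Gamma c /
        (Complex.Gamma (c - a) * Complex.Gamma (c - b)))) := by
    exact ((Complex.GammaSeq_tendsto_Gamma _).mul (Complex.GammaSeq_tendsto_Gamma _)).div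
      (((Complex.GammaSeq_tendsto_Gamma _).mul (Complex.GammaSeq_tendsto_Gamma _)))
      (mul_ne_zero hga hgb)
  rw [← Filter.tendsto_add_atTop_iff_nat 1]
  refine Tendsto.congr' ?_ hGS
  filter_upwards [eventually_ge_atTop 1] with n hn
  exact (X_eq a b c hc h ha hbb hn).symm

lemma norm_poch_prod (γ : ℂ) (n : ℕ) : ‖poch γ n‖ = ∏ k ∈ range n, ‖γ + (k : ℂ)‖ := by
  rw [poch]; exact norm_prod _ _

lemma Q_eq (a b c : ℂ) (hc : ∀ n : ℕ, c + n ≠ 0) (N n : ℕ) :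
    poch c N * T a b (c + N) n = (Complex.Gamma c)⁻¹ * Q a b (c + N) n := by
  have hΓc : Complex.Gamma c ≠ 0 := by
    have := Gamma_shift_ne_zero hc 0; simpa using this
  have h1 : Complex.Gamma ((c + (N : ℂ)) + (n : ℂ)) =
      Complex.Gamma c * (poch c N * poch (c + N) n) := by
    have e : (c + (N : ℂ)) + (n : ℂ) = c + ((N + n : ℕ) : ℂ) := by push_cast; ring
    rw [e, Gamma_add_nat hc (N + n), poch_add]
  rw [T, Q, h1]
  have hpN : poch c N ≠ 0 := poch_ne_zero hc N
  have hpn : poch (c + N) n ≠ 0 := poch_ne_zero (hc_shift hc N) n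
  have hf : ((n.factorial : ℕ) : ℂ) ≠ 0 := Nat.cast_ne_zero.2 n.factorial_ne_zero
  field_simp

lemma norm_Q_le (a b : ℂ) (γ : ℂ) (x : ℝ) (hx : 0 < x)
    (hγ : ∀ j : ℕ, x + j ≤ ‖γ + j‖) (n : ℕ) :
    ‖Q a b γ n‖ ≤ pochR ‖a‖ n * pochR ‖b‖ n / (n.factorial : ℝ) / pochR x n := by
  rw [Q, norm_div, norm_div, norm_mul]
  have hpg : pochR x n ≤ ‖poch γ n‖ := by
    rw [norm_poch_prod, pochR]
    refine Finset.prod_le_prod (fun k _ => by positivity) fun k _ => hγ k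
  have hfn : ‖((n.factorial : ℕ) : ℂ)‖ = (n.factorial : ℝ) := by
    rw [Complex.norm_natCast]
  rw [hfn]
  have h1 : ‖poch a n‖ * ‖poch b n‖ ≤ pochR ‖a‖ n * pochR ‖b‖ n :=
    mul_le_mul (norm_poch_le a n) (norm_poch_le b n) (norm_nonneg _)
      (pochR_nonneg (norm_nonneg _) n)
  have hfpos : (0 : ℝ) < (n.factorial : ℝ) := by exact_mod_cast n.factorial_pos
  have hd1 : ‖poch a n‖ * ‖poch b n‖ / (n.factorial : ℝ) ≤
      pochR ‖a‖ n * pochR ‖b‖ n / (n.factorial : ℝ) := by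
    gcongr
  refine div_le_div₀ (div_nonneg (mul_nonneg (pochR_nonneg (norm_nonneg a) n)
    (pochR_nonneg (norm_nonneg b) n)) (Nat.cast_nonneg _)) hd1 (pochR_pos hx n) hpg

lemma summable_bound {α β γx : ℝ} (hα : 0 ≤ α) (hβ : 0 ≤ β)
    (hγ1 : α + β + 1 ≤ γx) (hγ2 : 3*α*β + 2*α + 2*β ≤ γx) :
    Summable (fun m : ℕ =>
      pochR α (m+1) * pochR β (m+1) / ((m+1).factorial : ℝ) / pochR γx (m+1)) := by
  have hγpos : 0 < γx := by linarith
  set B : ℕ → ℝ := fun m =>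
    pochR α (m+1) * pochR β (m+1) / ((m+1).factorial : ℝ) / pochR γx (m+1) with hB
  have hBnonneg : ∀ m, 0 ≤ B m := by
    intro m
    refine div_nonneg (div_nonneg (mul_nonneg ?_ ?_) ?_) ?_
    · exact pochR_nonneg hα _
    · exact pochR_nonneg hβ _
    · positivity
    · exact (pochR_pos hγpos _).le
  have hrec : ∀ m : ℕ, B (m+1) =
      B m * ((α+((m:ℝ)+1))*(β+((m:ℝ)+1))/((((m:ℝ)+2))*(γx+((m:ℝ)+1)))) := by
    intro m
    rw [hB]
    simp only
    rw [pochR_succ α (m+1), pochR_succ β (m+1), pochR_succ γx (m+1)]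
    have hfac : (((m+2).factorial : ℕ) : ℝ) = ((m:ℝ)+2) * ((m+1).factorial : ℝ) := by
      push_cast [Nat.factorial_succ]; ring
    have e : (m + 1 + 1) = m + 2 := rfl
    rw [e, hfac]
    have h1 : pochR γx (m+1) ≠ 0 := (pochR_pos hγpos _).ne'
    have h2 : ((m+1).factorial : ℝ) ≠ 0 := by positivity
    have h3 : (γx+((m:ℝ)+1)) ≠ 0 := by positivity
    have h4 : ((m:ℝ)+2) ≠ 0 := by positivity
    push_cast
    field_simp
  have hstep : ∀ m : ℕ, B (m+1) ≤ B m * (((m:ℝ)+1)/((m:ℝ)+3)) := by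
    intro m
    rw [hrec m]
    refine mul_le_mul_of_nonneg_left ?_ (hBnonneg m)
    rw [div_le_div_iff₀ (by positivity) (by positivity)]
    have hm : (0:ℝ) ≤ (m:ℝ) := Nat.cast_nonneg m
    nlinarith [mul_le_mul_of_nonneg_right hγ2 (by linarith : (0:ℝ) ≤ (m:ℝ)+1),
      mul_le_mul_of_nonneg_right hγ1 (by nlinarith : (0:ℝ) ≤ ((m:ℝ)+1)^2),
      mul_nonneg (mul_nonneg hα hβ) hm, mul_nonneg hα hm, mul_nonneg hβ hm,
      mul_nonneg (mul_nonneg hα hβ) (mul_nonneg hm hm)]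
  set w : ℕ → ℝ := fun m => 1/(((m:ℝ)+1)*((m:ℝ)+2)) with hw
  have hwpos : ∀ m, 0 < w m := fun m => by positivity
  have hwrec : ∀ m : ℕ, w (m+1) = w m * (((m:ℝ)+1)/((m:ℝ)+3)) := by
    intro m
    rw [hw]
    simp only
    push_cast
    field_simp
    ring
  have hind : ∀ m, B m ≤ (2 * B 0) * w m := by
    intro m
    induction m with
    | zero =>
        have : w 0 = 1/2 := by norm_num [hw]
        rw [this]
        linarith [hBnonneg 0]
    | succ m ih =>
        calc B (m+1) ≤ B m * (((m:ℝ)+1)/((m:ℝ)+3)) := hstep m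
          _ ≤ ((2 * B 0) * w m) * (((m:ℝ)+1)/((m:ℝ)+3)) :=
              mul_le_mul_of_nonneg_right ih (by positivity)
          _ = (2 * B 0) * w (m+1) := by rw [hwrec m]; ring
  have hsw : Summable w := by
    have h2 : Summable (fun m : ℕ => 1/((m:ℝ)+1)^2) := by
      have := (summable_nat_add_iff 1).2 (Real.summable_one_div_nat_pow.2 one_lt_two)
      refine this.congr fun m => ?_
      push_cast
      ring
    refine h2.of_nonneg_of_le (fun m => (hwpos m).le) fun m => ?_
    rw [hw]
    simp only
    rw [div_le_div_iff₀ (by positivity) (by positivity)]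
    nlinarith [Nat.cast_nonneg (α := ℝ) m]
  exact (hsw.mul_left (2 * B 0)).of_nonneg_of_le hBnonneg hind

lemma tendsto_S (a b c : ℂ) (hc : ∀ n : ℕ, c + n ≠ 0) (h : 0 < (c - a - b).re) :
    Tendsto (fun N : ℕ => poch c N * ∑' n, T a b (c + N) n) atTop
      (𝓝 ((Complex.Gamma c)⁻¹)) := by
  have hΓc : Complex.Gamma c ≠ 0 := by
    have := Gamma_shift_ne_zero hc 0; simpa using this
  set α := ‖a‖ with hα
  set β := ‖b‖ with hβ
  set γreq : ℝ := α + β + 1 + (3*α*β + 2*α + 2*β) + 2 with hγreq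
  obtain ⟨N₁, hN₁⟩ := exists_nat_ge (‖c‖ + γreq)
  set γx : ℝ := (N₁ : ℝ) - ‖c‖ with hγx
  have hα0 : 0 ≤ α := norm_nonneg a
  have hβ0 : 0 ≤ β := norm_nonneg b
  have hγ1 : α + β + 1 ≤ γx := by
    rw [hγx]; have := hN₁; rw [hγreq] at this; nlinarith [mul_nonneg hα0 hβ0]
  have hγ2 : 3*α*β + 2*α + 2*β ≤ γx := by
    rw [hγx]; have := hN₁; rw [hγreq] at this; nlinarith [mul_nonneg hα0 hβ0]
  have hγpos : (0:ℝ) < γx := by nlinarith [mul_nonneg hα0 hβ0]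
  -- lower bound on factors of poch (c+N) for N ≥ N₁
  have hfactor : ∀ N : ℕ, (N₁ : ℝ) ≤ (N : ℝ) → ∀ j : ℕ, γx + j ≤ ‖(c + (N:ℂ)) + (j:ℂ)‖ := by
    intro N hN j
    have e : (c + (N:ℂ)) + (j:ℂ) = c + ((N + j : ℕ) : ℂ) := by push_cast; ring
    rw [e]
    have h1 : ‖((N + j : ℕ) : ℂ)‖ - ‖c‖ ≤ ‖c + ((N + j : ℕ) : ℂ)‖ := by
      have h2 := norm_add_le (c + ((N + j : ℕ) : ℂ)) (-c)
      simp only [add_neg_cancel_comm, norm_neg] at h2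
      linarith
    rw [Complex.norm_natCast] at h1
    have : γx + (j : ℝ) ≤ ((N + j : ℕ) : ℝ) - ‖c‖ := by
      push_cast; rw [hγx]; linarith
    linarith
  -- the remainder tends to 0
  have hR : Tendsto (fun N : ℕ => ∑' m : ℕ, Q a b (c + N) (m+1)) atTop (𝓝 0) := by
    have hbd := summable_bound hα0 hβ0 hγ1 hγ2
    have := tendsto_tsum_of_dominated_convergence (𝓕 := atTop)
      (f := fun (N : ℕ) (m : ℕ) => Q a b (c + N) (m+1)) (g := fun _ => (0:ℂ))
      (bound := fun m => pochR α (m+1) * pochR β (m+1) / ((m+1).factorial : ℝ) / pochR γx (m+1))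
      hbd ?_ ?_
    · simpa using this
    · -- pointwise convergence to 0
      intro m
      rw [tendsto_zero_iff_norm_tendsto_zero]
      have hub : ∀ᶠ N : ℕ in atTop,
          ‖Q a b (c + N) (m+1)‖ ≤
            (pochR α (m+1) * pochR β (m+1) / ((m+1).factorial : ℝ)) / ((N : ℝ) - ‖c‖) := by
        filter_upwards [eventually_ge_atTop N₁] with N hN
        have hNr : (N₁ : ℝ) ≤ (N : ℝ) := by exact_mod_cast hN
        have hden : (0:ℝ) < (N : ℝ) - ‖c‖ := by rw [hγx] at hγpos; linarith
        have hlow : (N : ℝ) - ‖c‖ ≤ ‖poch (c + N) (m+1)‖ := by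
          rw [norm_poch_prod]
          have hone : ∀ k ∈ range (m+1), (1:ℝ) ≤ ‖(c + (N:ℂ)) + (k:ℂ)‖ := by
            intro k _
            have := hfactor N hNr k
            have : (1:ℝ) ≤ γx + k := by
              have : (0:ℝ) ≤ (k:ℝ) := Nat.cast_nonneg k
              nlinarith [mul_nonneg hα0 hβ0]
            linarith [hfactor N hNr k]
          have h0 : ‖(c + (N:ℂ)) + ((0:ℕ):ℂ)‖ ≤ ∏ k ∈ range (m+1), ‖(c + (N:ℂ)) + (k:ℂ)‖ := by
            rw [Finset.prod_range_succ']
            have hone' : (1:ℝ) ≤ ∏ i ∈ range m, ‖(c + (N:ℂ)) + ((i+1 : ℕ):ℂ)‖ := by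
              have := Finset.prod_le_prod (s := range m) (f := fun _ : ℕ => (1:ℝ))
                (g := fun i : ℕ => ‖(c + (N:ℂ)) + ((i+1 : ℕ):ℂ)‖)
                (fun i _ => zero_le_one) (fun i hi => hone (i+1) (by simp at hi ⊢; omega))
              simpa using this
            have hf0 : (0:ℝ) ≤ ‖(c + (N:ℂ)) + ((0:ℕ):ℂ)‖ := norm_nonneg _
            nlinarith
          have h00 : (N : ℝ) - ‖c‖ ≤ ‖(c + (N:ℂ)) + ((0:ℕ):ℂ)‖ := by
            have e : ((c + (N:ℂ)) + ((0:ℕ):ℂ)) + (-c) = ((N:ℕ):ℂ) := by push_cast; ring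
            have h2 := norm_add_le ((c + (N:ℂ)) + ((0:ℕ):ℂ)) (-c)
            rw [e, norm_neg, Complex.norm_natCast] at h2
            linarith
          linarith
        have hnum : ‖poch a (m+1) * poch b (m+1) / (((m+1).factorial : ℕ) : ℂ)‖ ≤
            pochR α (m+1) * pochR β (m+1) / ((m+1).factorial : ℝ) := by
          rw [norm_div, norm_mul, Complex.norm_natCast]
          have hfpos : (0:ℝ) < ((m+1).factorial : ℝ) := by exact_mod_cast (m+1).factorial_pos
          have h1 : ‖poch a (m+1)‖ * ‖poch b (m+1)‖ ≤ pochR α (m+1) * pochR β (m+1) :=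
            mul_le_mul (norm_poch_le a _) (norm_poch_le b _) (norm_nonneg _)
              (pochR_nonneg hα0 _)
          gcongr
        rw [Q, norm_div]
        exact div_le_div₀ (div_nonneg (mul_nonneg (pochR_nonneg hα0 _) (pochR_nonneg hβ0 _))
          (Nat.cast_nonneg _)) hnum hden hlow
      refine squeeze_zero' (Eventually.of_forall fun N => norm_nonneg _) hub ?_
      refine Tendsto.div_atTop tendsto_const_nhds ?_
      have := tendsto_natCast_atTop_atTop (R := ℝ)
      exact tendsto_atTop_add_const_right atTop (-‖c‖) this
    · -- uniform bound
      filter_upwards [eventually_ge_atTop N₁] with N hN m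
      have hNr : (N₁ : ℝ) ≤ (N : ℝ) := by exact_mod_cast hN
      exact norm_Q_le a b (c + N) γx hγpos (hfactor N hNr) (m+1)
  -- rewrite the partial expression
  have hEq : ∀ N : ℕ, poch c N * ∑' n, T a b (c + N) n =
      (Complex.Gamma c)⁻¹ * (1 + ∑' m : ℕ, Q a b (c + N) (m+1)) := by
    intro N
    have hcN : ∀ n : ℕ, (c + (N : ℂ)) + n ≠ 0 := hc_shift hc N
    have hTN : Summable (T a b (c + N)) := summable_T a b (c + N) hcN (re_shift c a b N h)
    have hQsum : Summable (Q a b (c + N)) := by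
      have h1 : ∀ n, Q a b (c + N) n = Complex.Gamma c * (poch c N * T a b (c + N) n) := by
        intro n
        rw [Q_eq a b c hc N n]
        field_simp
      refine Summable.congr ((hTN.mul_left (poch c N)).mul_left (Complex.Gamma c)) fun n => ?_
      rw [h1 n]
    calc poch c N * ∑' n, T a b (c + N) n
        = ∑' n, poch c N * T a b (c + N) n := by rw [tsum_mul_left]
      _ = ∑' n, (Complex.Gamma c)⁻¹ * Q a b (c + N) n := by
          refine tsum_congr fun n => Q_eq a b c hc N n
      _ = (Complex.Gamma c)⁻¹ * ∑' n, Q a b (c + N) n := by rw [tsum_mul_left]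
      _ = (Complex.Gamma c)⁻¹ * (1 + ∑' m : ℕ, Q a b (c + N) (m+1)) := by
          rw [hQsum.tsum_eq_zero_add]
          congr 2
          rw [Q, poch_zero, poch_zero, poch_zero]
          norm_num
  have hfin : Tendsto (fun N : ℕ =>
      (Complex.Gamma c)⁻¹ * (1 + ∑' m : ℕ, Q a b (c + N) (m+1))) atTop
      (𝓝 ((Complex.Gamma c)⁻¹)) := by
    have h1 : Tendsto (fun N : ℕ => (1:ℂ) + ∑' m : ℕ, Q a b (c + N) (m+1)) atTop (𝓝 1) := by
      have h2 : Tendsto (fun _ : ℕ => (1:ℂ)) atTop (𝓝 1) := tendsto_const_nhds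
      have := h2.add hR
      simpa using this
    have := h1.const_mul ((Complex.Gamma c)⁻¹)
    simpa using this
  exact hfin.congr fun N => (hEq N).symm

lemma degenerate (a b c : ℂ) (hc : ∀ n : ℕ, c + n ≠ 0) (h : 0 < (c - a - b).re)
    (hm : ∃ N : ℕ, poch (c - a) N * poch (c - b) N = 0) :
    ∑' n, T a b c n = 0 := by
  obtain ⟨N, hN⟩ := hm
  rw [iterate_rel a b c hc h N, hN, zero_div, zero_mul]


end GaussAux

open Filter Finset Complex Topology in
set_option maxHeartbeats 1000000 in
/-- Gauss's summation theorem for the regularized `₂F₁` at `1`: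
`Σ_{n≥0} (a₁)_n (a₂)_n / (n! Γ(b₁+n)) = Γ(b₁-a₁-a₂)/(Γ(b₁-a₁)Γ(b₁-a₂))`,
for `Re(b₁-a₁-a₂) > 0` and `b₁` not a nonpositive integer. -/
theorem gauss_2F1_regularized (a₁ a₂ b₁ : ℂ)
    (h : 0 < (b₁ - a₁ - a₂).re) (hb : ∀ n : ℕ, b₁ ≠ -(n : ℂ)) :
    ∑' n : ℕ, poch a₁ n * poch a₂ n / ((n.factorial : ℂ) * Complex.Gamma (b₁ + (n : ℂ))) =
      Complex.Gamma (b₁ - a₁ - a₂) /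
        (Complex.Gamma (b₁ - a₁) * Complex.Gamma (b₁ - a₂)) := by
  have hc : ∀ n : ℕ, b₁ + n ≠ 0 := fun n h0 => hb n (by linear_combination h0)
  show ∑' n : ℕ, GaussAux.T a₁ a₂ b₁ n = _
  by_cases hA : ∀ m : ℕ, (b₁ - a₁) + m ≠ 0
  · by_cases hB : ∀ m : ℕ, (b₁ - a₂) + m ≠ 0
    · -- main case
      have hΓc : Complex.Gamma b₁ ≠ 0 := by
        refine Complex.Gamma_ne_zero fun m => ?_
        intro h0; exact hc m (by rw [h0]; ring)
      have hX := GaussAux.tendsto_X a₁ a₂ b₁ hc h hA hB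
      have hS := GaussAux.tendsto_S a₁ a₂ b₁ hc h
      have hXY := hX.mul hS
      have heq : ∀ N : ℕ,
          (poch (b₁ - a₁) N * poch (b₁ - a₂) N /
            (poch (b₁ - a₁ - a₂) N * poch b₁ N)) *
          (poch b₁ N * ∑' n, GaussAux.T a₁ a₂ (b₁ + N) n) =
          ∑' n, GaussAux.T a₁ a₂ b₁ n := by
        intro N
        rw [GaussAux.iterate_rel a₁ a₂ b₁ hc h N]
        have hp3 : poch (b₁ - a₁ - a₂) N ≠ 0 :=
          GaussAux.poch_ne_zero (GaussAux.ne_zero_of_re_pos' h) N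
        have hp4 : poch b₁ N ≠ 0 := GaussAux.poch_ne_zero hc N
        field_simp
      have hconst : Tendsto (fun _ : ℕ => ∑' n, GaussAux.T a₁ a₂ b₁ n) atTop
          (𝓝 (Complex.Gamma (b₁ - a₁ - a₂) * Complex.Gamma b₁ /
            (Complex.Gamma (b₁ - a₁) * Complex.Gamma (b₁ - a₂)) *
              (Complex.Gamma b₁)⁻¹)) :=
        hXY.congr fun N => heq N
      have hval := tendsto_nhds_unique hconst tendsto_const_nhds
      rw [← hval]
      have hring : ∀ A B : ℂ, A * Complex.Gamma b₁ / B * (Complex.Gamma b₁)⁻¹ =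
          A / B * (Complex.Gamma b₁ * (Complex.Gamma b₁)⁻¹) := by
        intro A B; ring
      rw [hring, mul_inv_cancel₀ hΓc, mul_one]
    · -- b₁ - a₂ is a nonpositive integer
      push_neg at hB
      obtain ⟨m, hm⟩ := hB
      have hz : poch (b₁ - a₁) (m+1) * poch (b₁ - a₂) (m+1) = 0 := by
        have : poch (b₁ - a₂) (m+1) = 0 := by
          rw [poch]
          exact Finset.prod_eq_zero (Finset.self_mem_range_succ m) hm
        rw [this, mul_zero]
      rw [GaussAux.degenerate a₁ a₂ b₁ hc h ⟨m+1, hz⟩]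
      have : Complex.Gamma (b₁ - a₂) = 0 :=
        (Complex.Gamma_eq_zero_iff _).2 ⟨m, by linear_combination hm⟩
      rw [this, mul_zero, div_zero]
  · -- b₁ - a₁ is a nonpositive integer
    push_neg at hA
    obtain ⟨m, hm⟩ := hA
    have hz : poch (b₁ - a₁) (m+1) * poch (b₁ - a₂) (m+1) = 0 := by
      have : poch (b₁ - a₁) (m+1) = 0 := by
        rw [poch]
        exact Finset.prod_eq_zero (Finset.self_mem_range_succ m) hm
      rw [this, zero_mul]
    rw [GaussAux.degenerate a₁ a₂ b₁ hc h ⟨m+1, hz⟩]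
    have : Complex.Gamma (b₁ - a₁) = 0 :=
      (Complex.Gamma_eq_zero_iff _).2 ⟨m, by linear_combination hm⟩
    rw [this, zero_mul, div_zero]
end

section
/- Three-term general relation for ₄F₃ at a general argument z: with f(z) = ₄F₃(a₁,a₂,a₃,a₄; b₁+1, b₂+1, b₃; z) and T_a = 1 + (1/a) z d/dz, assume a₁ = -m terminates all series (m ∈ ℕ₀), and all lower parameters avoid nonpositive integers. Then 0 = b₁b₂(a₃a₄(b₂-a₂) + b₁(a₃(a₂-a₄) + a₂(a₄-b₂)) + a₁(a₃a₄ + (a₂-a₃-a₄)b₂ + b₁(b₂-a₂)))·₄F₃(a₁,a₂,a₃,a₄;b₁,b₂,b₃;z) + a₃a₄(a₁-b₁)(a₂-b₂)(b₁-b₂)·₄F₃(a₁,a₂,a₃+1,a₄+1;b₁+1,b₂+1,b₃;z) - a₂b₁(b₁-a₁)(a₃-b₂)(b₂-a₄)·₄F₃(a₁,a₂+1,a₃,a₄;b₁,b₂+1,b₃;z) - a₁b₂(a₃-b₁)(b₁-a₄)(a₂-b₂)·₄F₃(a₁+1,a₂,a₃,a₄;b₁+1,b₂,b₃;z). -/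
/-- The hypergeometric series `₄F₃(a₁,a₂,a₃,a₄;b₁,b₂,b₃;z)`. -/
noncomputable def F43 (a₁ a₂ a₃ a₄ b₁ b₂ b₃ z : ℂ) : ℂ :=
  ∑' n : ℕ, poch a₁ n * poch a₂ n * poch a₃ n * poch a₄ n * z ^ n /
    ((n.factorial : ℂ) * poch b₁ n * poch b₂ n * poch b₃ n)

lemma poch_ne_zero {b : ℂ} (hb : ∀ k : ℕ, b ≠ -(k : ℂ)) (n : ℕ) : poch b n ≠ 0 :=
  Finset.prod_ne_zero_iff.2 fun k _ h0 => hb k (by linear_combination h0)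

lemma poch_succ (a : ℂ) (n : ℕ) : a * poch (a + 1) n = poch a n * (a + n) := by
  rw [poch, poch, ← Finset.prod_range_succ, Finset.prod_range_succ']
  rw [mul_comm]
  congr 1
  · apply Finset.prod_congr rfl
    intro k _
    push_cast
    ring
  · simp

lemma poch_neg_nat (m n : ℕ) (h : m < n) : poch (-(m : ℂ)) n = 0 :=
  Finset.prod_eq_zero (Finset.mem_range.2 h) (by ring)

/-- Abstract per-term version of the three-term relation. -/
lemma term_id (nfac A1 A2 A3 A4 P2 P3 P4 B1 B2 B3 Q1 Q2 a₁ a₂ a₃ a₄ b₁ b₂ nn zn : ℂ)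
    (hfac : nfac ≠ 0) (hB1 : B1 ≠ 0) (hB2 : B2 ≠ 0) (hB3 : B3 ≠ 0) (hQ1 : Q1 ≠ 0) (hQ2 : Q2 ≠ 0)
    (hb1n : b₁ + nn ≠ 0) (hb2n : b₂ + nn ≠ 0)
    (e2 : a₂ * P2 = A2 * (a₂ + nn)) (e3 : a₃ * P3 = A3 * (a₃ + nn)) (e4 : a₄ * P4 = A4 * (a₄ + nn))
    (f1 : b₁ * Q1 = B1 * (b₁ + nn)) (f2 : b₂ * Q2 = B2 * (b₂ + nn)) :
    0 = b₁ * b₂ * (a₃ * a₄ * (b₂ - a₂) + b₁ * (a₃ * (a₂ - a₄) + a₂ * (a₄ - b₂))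
          + a₁ * (a₃ * a₄ + (a₂ - a₃ - a₄) * b₂ + b₁ * (b₂ - a₂))) *
        (A1 * A2 * A3 * A4 * zn / (nfac * B1 * B2 * B3))
      + a₃ * a₄ * (a₁ - b₁) * (a₂ - b₂) * (b₁ - b₂) *
        (A1 * A2 * P3 * P4 * zn / (nfac * Q1 * Q2 * B3))
      - a₂ * b₁ * (b₁ - a₁) * (a₃ - b₂) * (b₂ - a₄) *
        (A1 * P2 * A3 * A4 * zn / (nfac * B1 * Q2 * B3))
      - b₂ * (a₃ - b₁) * (b₁ - a₄) * (a₂ - b₂) *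
        (A1 * (a₁ + nn) * A2 * A3 * A4 * zn / (nfac * Q1 * B2 * B3)) := by
  have hD : nfac * B1 * B2 * B3 * ((b₁ + nn) * (b₂ + nn)) ≠ 0 :=
    mul_ne_zero (mul_ne_zero (mul_ne_zero (mul_ne_zero hfac hB1) hB2) hB3)
      (mul_ne_zero hb1n hb2n)
  have g1 : b₁ * b₂ * (a₃ * a₄ * (b₂ - a₂) + b₁ * (a₃ * (a₂ - a₄) + a₂ * (a₄ - b₂))
          + a₁ * (a₃ * a₄ + (a₂ - a₃ - a₄) * b₂ + b₁ * (b₂ - a₂))) *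
        (A1 * A2 * A3 * A4 * zn / (nfac * B1 * B2 * B3))
      = b₁ * b₂ * (a₃ * a₄ * (b₂ - a₂) + b₁ * (a₃ * (a₂ - a₄) + a₂ * (a₄ - b₂))
          + a₁ * (a₃ * a₄ + (a₂ - a₃ - a₄) * b₂ + b₁ * (b₂ - a₂))) *
        (A1 * A2 * A3 * A4 * zn) * ((b₁ + nn) * (b₂ + nn))
        / (nfac * B1 * B2 * B3 * ((b₁ + nn) * (b₂ + nn))) := by
    rw [← mul_div_assoc, div_eq_div_iff (mul_ne_zero (mul_ne_zero (mul_ne_zero hfac hB1) hB2) hB3) hD]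
    ring
  have g2 : a₃ * a₄ * (a₁ - b₁) * (a₂ - b₂) * (b₁ - b₂) *
        (A1 * A2 * P3 * P4 * zn / (nfac * Q1 * Q2 * B3))
      = (a₁ - b₁) * (a₂ - b₂) * (b₁ - b₂) * (A1 * A2 * A3 * A4 * zn)
          * (b₁ * b₂ * (a₃ + nn) * (a₄ + nn))
        / (nfac * B1 * B2 * B3 * ((b₁ + nn) * (b₂ + nn))) := by
    rw [← mul_div_assoc, div_eq_div_iff (mul_ne_zero (mul_ne_zero (mul_ne_zero hfac hQ1) hQ2) hB3) hD]
    linear_combination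
      ((a₁ - b₁) * (a₂ - b₂) * (b₁ - b₂) * nfac * B3 * A1 * A2 * zn) *
        ((a₄ * P4 * (B1 * (b₁ + nn)) * (B2 * (b₂ + nn))) * e3
          + (A3 * (a₃ + nn) * (B1 * (b₁ + nn)) * (B2 * (b₂ + nn))) * e4
          - (A3 * (a₃ + nn) * (A4 * (a₄ + nn)) * (B2 * (b₂ + nn))) * f1
          - (A3 * (a₃ + nn) * (A4 * (a₄ + nn)) * (b₁ * Q1)) * f2)
  have g3 : a₂ * b₁ * (b₁ - a₁) * (a₃ - b₂) * (b₂ - a₄) *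
        (A1 * P2 * A3 * A4 * zn / (nfac * B1 * Q2 * B3))
      = (b₁ - a₁) * (a₃ - b₂) * (b₂ - a₄) * (A1 * A2 * A3 * A4 * zn)
          * (b₁ * b₂ * (a₂ + nn) * (b₁ + nn))
        / (nfac * B1 * B2 * B3 * ((b₁ + nn) * (b₂ + nn))) := by
    rw [← mul_div_assoc, div_eq_div_iff (mul_ne_zero (mul_ne_zero (mul_ne_zero hfac hB1) hQ2) hB3) hD]
    linear_combination
      ((b₁ - a₁) * (a₃ - b₂) * (b₂ - a₄) * b₁ * A1 * A3 * A4 * zn * nfac * B1 * B3 * (b₁ + nn)) *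
        ((B2 * (b₂ + nn)) * e2 - (A2 * (a₂ + nn)) * f2)
  have g4 : b₂ * (a₃ - b₁) * (b₁ - a₄) * (a₂ - b₂) *
        (A1 * (a₁ + nn) * A2 * A3 * A4 * zn / (nfac * Q1 * B2 * B3))
      = (a₃ - b₁) * (b₁ - a₄) * (a₂ - b₂) * (A1 * A2 * A3 * A4 * zn)
          * (b₁ * b₂ * (a₁ + nn) * (b₂ + nn))
        / (nfac * B1 * B2 * B3 * ((b₁ + nn) * (b₂ + nn))) := by
    rw [← mul_div_assoc, div_eq_div_iff (mul_ne_zero (mul_ne_zero (mul_ne_zero hfac hQ1) hB2) hB3) hD]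
    linear_combination
      (-((a₃ - b₁) * (b₁ - a₄) * (a₂ - b₂) * b₂ * A1 * (a₁ + nn) * A2 * A3 * A4 * zn
          * nfac * B2 * B3 * (b₂ + nn))) * f1
  rw [g1, g2, g3, g4, ← add_div, ← sub_div, ← sub_div, eq_comm,
    div_eq_zero_iff]
  left
  ring

/-- Three-term (four-series) general relation for terminating `₄F₃` at a general
argument `z`. -/
theorem F43_general_relation (m : ℕ) (a₁ a₂ a₃ a₄ b₁ b₂ b₃ z : ℂ) (ha₁ : a₁ = -(m : ℂ))
    (hb₁ : ∀ n : ℕ, b₁ ≠ -(n : ℂ)) (hb₂ : ∀ n : ℕ, b₂ ≠ -(n : ℂ))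
    (hb₃ : ∀ n : ℕ, b₃ ≠ -(n : ℂ)) :
    0 = b₁ * b₂ * (a₃ * a₄ * (b₂ - a₂) + b₁ * (a₃ * (a₂ - a₄) + a₂ * (a₄ - b₂))
          + a₁ * (a₃ * a₄ + (a₂ - a₃ - a₄) * b₂ + b₁ * (b₂ - a₂))) *
        F43 a₁ a₂ a₃ a₄ b₁ b₂ b₃ z
      + a₃ * a₄ * (a₁ - b₁) * (a₂ - b₂) * (b₁ - b₂) *
        F43 a₁ a₂ (a₃ + 1) (a₄ + 1) (b₁ + 1) (b₂ + 1) b₃ z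
      - a₂ * b₁ * (b₁ - a₁) * (a₃ - b₂) * (b₂ - a₄) *
        F43 a₁ (a₂ + 1) a₃ a₄ b₁ (b₂ + 1) b₃ z
      - a₁ * b₂ * (a₃ - b₁) * (b₁ - a₄) * (a₂ - b₂) *
        F43 (a₁ + 1) a₂ a₃ a₄ (b₁ + 1) b₂ b₃ z := by
  have hb₁' : ∀ k : ℕ, b₁ + 1 ≠ -(k : ℂ) := fun k h => hb₁ (k + 1) (by push_cast; linear_combination h)
  have hb₂' : ∀ k : ℕ, b₂ + 1 ≠ -(k : ℂ) := fun k h => hb₂ (k + 1) (by push_cast; linear_combination h)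
  have hA1 : ∀ n : ℕ, n ∉ Finset.range (m + 1) → poch a₁ n = 0 := fun n hn => by
    rw [ha₁]; exact poch_neg_nat m n (by simpa using hn)
  have hS1 : F43 a₁ a₂ a₃ a₄ b₁ b₂ b₃ z = ∑ n ∈ Finset.range (m + 1),
      poch a₁ n * poch a₂ n * poch a₃ n * poch a₄ n * z ^ n /
        ((n.factorial : ℂ) * poch b₁ n * poch b₂ n * poch b₃ n) := by
    rw [F43]
    exact tsum_eq_sum fun n hn => by rw [hA1 n hn]; simp
  have hS2 : F43 a₁ a₂ (a₃ + 1) (a₄ + 1) (b₁ + 1) (b₂ + 1) b₃ z = ∑ n ∈ Finset.range (m + 1),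
      poch a₁ n * poch a₂ n * poch (a₃ + 1) n * poch (a₄ + 1) n * z ^ n /
        ((n.factorial : ℂ) * poch (b₁ + 1) n * poch (b₂ + 1) n * poch b₃ n) := by
    rw [F43]
    exact tsum_eq_sum fun n hn => by rw [hA1 n hn]; simp
  have hS3 : F43 a₁ (a₂ + 1) a₃ a₄ b₁ (b₂ + 1) b₃ z = ∑ n ∈ Finset.range (m + 1),
      poch a₁ n * poch (a₂ + 1) n * poch a₃ n * poch a₄ n * z ^ n /
        ((n.factorial : ℂ) * poch b₁ n * poch (b₂ + 1) n * poch b₃ n) := by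
    rw [F43]
    exact tsum_eq_sum fun n hn => by rw [hA1 n hn]; simp
  have hS4 : a₁ * F43 (a₁ + 1) a₂ a₃ a₄ (b₁ + 1) b₂ b₃ z = ∑ n ∈ Finset.range (m + 1),
      poch a₁ n * (a₁ + n) * poch a₂ n * poch a₃ n * poch a₄ n * z ^ n /
        ((n.factorial : ℂ) * poch (b₁ + 1) n * poch b₂ n * poch b₃ n) := by
    rw [F43, ← tsum_mul_left]
    refine (tsum_congr fun k => ?_).trans (tsum_eq_sum fun n hn => by rw [hA1 n hn]; simp)
    rw [mul_div_assoc']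
    congr 1
    linear_combination (poch a₂ k * poch a₃ k * poch a₄ k * z ^ k) * poch_succ a₁ k
  have hre : a₁ * b₂ * (a₃ - b₁) * (b₁ - a₄) * (a₂ - b₂) * F43 (a₁ + 1) a₂ a₃ a₄ (b₁ + 1) b₂ b₃ z
      = b₂ * (a₃ - b₁) * (b₁ - a₄) * (a₂ - b₂) * (a₁ * F43 (a₁ + 1) a₂ a₃ a₄ (b₁ + 1) b₂ b₃ z) := by
    ring
  rw [hre, hS1, hS2, hS3, hS4, Finset.mul_sum, Finset.mul_sum, Finset.mul_sum, Finset.mul_sum,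
    ← Finset.sum_add_distrib, ← Finset.sum_sub_distrib, ← Finset.sum_sub_distrib]
  refine (Finset.sum_eq_zero fun n _ => ?_).symm
  have hb1n : b₁ + (n : ℂ) ≠ 0 := fun h => hb₁ n (by linear_combination h)
  have hb2n : b₂ + (n : ℂ) ≠ 0 := fun h => hb₂ n (by linear_combination h)
  exact (term_id (n.factorial : ℂ) (poch a₁ n) (poch a₂ n) (poch a₃ n) (poch a₄ n)
    (poch (a₂ + 1) n) (poch (a₃ + 1) n) (poch (a₄ + 1) n)
    (poch b₁ n) (poch b₂ n) (poch b₃ n) (poch (b₁ + 1) n) (poch (b₂ + 1) n)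
    a₁ a₂ a₃ a₄ b₁ b₂ (n : ℂ) (z ^ n)
    (Nat.cast_ne_zero.2 n.factorial_ne_zero)
    (poch_ne_zero hb₁ n) (poch_ne_zero hb₂ n) (poch_ne_zero hb₃ n)
    (poch_ne_zero hb₁' n) (poch_ne_zero hb₂' n) hb1n hb2n
    (poch_succ a₂ n) (poch_succ a₃ n) (poch_succ a₄ n)
    (poch_succ b₁ n) (poch_succ b₂ n)).symm
end
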